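/- arXiv:1101.3091 — 2 statements merged into one kernel-verified Lean document; each statement's English description precedes it below -/
import Mathlib

section
/- For every natural number n ≥ 1, the number of labelled connected combinatorial triangulations of size n (i.e., the number of such triangulations, not identifying isomorphic ones) is at least (2n+1)! · 6^{2n} / 2. -/
/-- A combinatorial triangulation of size `n`: `n` labelled tetrahedra (vertices labelled
by `Fin 4`, and the four faces of each tetrahedron labelled by the opposite vertex),
a fixed-point-free involution `glue` pairing up the `4n` faces, and for each face `f`
one of the six rotations or reflections identifying `f` with `glue f`.  A rotation or
reflection (a bijection between the three vertices of the two glued faces) is encoded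
as the unique permutation of all four vertex labels extending it, i.e. a permutation
sending the vertex opposite `f` to the vertex opposite `glue f`; the bijections assigned
to `f` and `glue f` must be mutually inverse. -/
structure CombinatorialTriangulation (n : ℕ) where
  glue : Equiv.Perm (Fin n × Fin 4)
  glue_involutive : ∀ f, glue (glue f) = f
  glue_fixedPointFree : ∀ f, glue f ≠ f
  rot : Fin n × Fin 4 → Equiv.Perm (Fin 4)
  rot_opp : ∀ f, rot f f.2 = (glue f).2
  rot_inverse : ∀ f, rot (glue f) = (rot f)⁻¹

/-- The face pairing graph, as a simple graph on the tetrahedra: two tetrahedra are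
adjacent when some face of one is identified with a face of the other.  (Connectivity
of the 4-valent face pairing multigraph is equivalent to connectivity of this graph.) -/
def facePairingGraph {n : ℕ} (T : CombinatorialTriangulation n) : SimpleGraph (Fin n) :=
  SimpleGraph.fromRel (fun t t' => ∃ i : Fin 4, (T.glue (t, i)).1 = t')

/-- A combinatorial triangulation is connected if its face pairing graph is connected. -/
def IsConnectedTriangulation {n : ℕ} (T : CombinatorialTriangulation n) : Prop :=
  (facePairingGraph T).Connected

set_option linter.unusedSectionVars false
set_option maxHeartbeats 4000000
set_option maxRecDepth 10000

open Equiv Finset Nat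




variable {X : Type*} [Fintype X] [DecidableEq X]

/-- partial perfect matchings: involutions of `X` moving exactly the elements of `s`,
    with no fixed point inside `s`. -/
def MatchOn (s : Finset X) : Type _ :=
  {g : X → X // (∀ a ∈ s, g a ∈ s ∧ g (g a) = a ∧ g a ≠ a) ∧ ∀ a ∉ s, g a = a}

instance (s : Finset X) : Fintype (MatchOn s) := by
  unfold MatchOn; infer_instance

/-- extend a matching by the pair `{x,y}` -/
def MatchOn.extend (s : Finset X) (x : X) (hx : x ∈ s) (y : {y // y ∈ s.erase x})
    (G : MatchOn ((s.erase x).erase y.1)) : MatchOn s := by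
  refine ⟨fun a => if a = x then y.1 else if a = y.1 then x else G.1 a, ?_, ?_⟩
  · obtain ⟨y, hy⟩ := y
    obtain ⟨g, hg1, hg2⟩ := G
    simp only
    have hyx : y ≠ x := (Finset.mem_erase.mp hy).1
    have hys : y ∈ s := (Finset.mem_erase.mp hy).2
    have hfx : (if x = x then y else if x = y then x else g x) = y := if_pos rfl
    have hfy : (if y = x then y else if y = y then x else g y) = x := by
      rw [if_neg hyx, if_pos rfl]
    intro a ha
    by_cases hax : a = x
    · rw [hax, hfx, hfy]
      exact ⟨hys, rfl, hyx⟩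
    · by_cases hay : a = y
      · rw [hay, hfy, hfx]
        exact ⟨hx, rfl, fun h => hyx h.symm⟩
      · rw [if_neg hax, if_neg hay]
        have hain : a ∈ (s.erase x).erase y := by
          rw [Finset.mem_erase, Finset.mem_erase]; exact ⟨hay, hax, ha⟩
        obtain ⟨hga, hgga, hgne⟩ := hg1 a hain
        have hgax : g a ≠ x := fun h => by
          rw [h] at hga
          exact (Finset.mem_erase.mp (Finset.mem_erase.mp hga).2).1 rfl
        have hgay : g a ≠ y := fun h => by
          rw [h] at hga
          exact (Finset.mem_erase.mp hga).1 rfl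
        rw [if_neg hgax, if_neg hgay]
        exact ⟨Finset.mem_of_mem_erase (Finset.mem_of_mem_erase hga), hgga, hgne⟩
  · obtain ⟨y, hy⟩ := y
    obtain ⟨g, hg1, hg2⟩ := G
    simp only
    have hys : y ∈ s := (Finset.mem_erase.mp hy).2
    intro a ha
    have hax : a ≠ x := fun h => ha (h ▸ hx)
    have hay : a ≠ y := fun h => ha (h ▸ hys)
    rw [if_neg hax, if_neg hay]
    exact hg2 a (fun h => ha (Finset.mem_of_mem_erase (Finset.mem_of_mem_erase h)))

theorem MatchOn.extend_apply (s : Finset X) (x : X) (hx : x ∈ s) (y : {y // y ∈ s.erase x})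
    (G : MatchOn ((s.erase x).erase y.1)) (a : X) :
    (MatchOn.extend s x hx y G).1 a = if a = x then y.1 else if a = y.1 then x else G.1 a := rfl

theorem matchOn_card_ge (k : ℕ) : ∀ s : Finset X, s.card = 2 * k →
    Nat.doubleFactorial (2 * k - 1) ≤ Nat.card (MatchOn s) := by
  induction k with
  | zero =>
    intro s hs
    have hse : s = ∅ := Finset.card_eq_zero.mp (by omega)
    subst hse
    have : Nonempty (MatchOn (∅ : Finset X)) :=
      ⟨⟨id, ⟨fun a ha => absurd ha (Finset.notMem_empty a), fun a _ => rfl⟩⟩⟩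
    have := Nat.card_pos (α := MatchOn (∅ : Finset X))
    simpa using Nat.succ_le_of_lt this
  | succ k ih =>
    intro s hs
    have hsne : s.Nonempty := Finset.card_pos.mp (by omega)
    obtain ⟨x, hx⟩ := hsne
    set Φ : (Σ y : {y // y ∈ s.erase x}, MatchOn ((s.erase x).erase y.1)) → MatchOn s :=
      fun d => MatchOn.extend s x hx d.1 d.2 with hΦdef
    have hinj : Function.Injective Φ := by
      rintro ⟨y, G⟩ ⟨y', G'⟩ heq
      have hfun : ∀ a, (Φ ⟨y, G⟩).1 a = (Φ ⟨y', G'⟩).1 a := fun a => by rw [heq]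
      have h1 := hfun x
      rw [hΦdef] at h1
      simp only [MatchOn.extend_apply, if_true] at h1
      -- h1 : y.1 = y'.1
      have hyy : y = y' := Subtype.ext h1
      subst hyy
      have hGeq : G.1 = G'.1 := by
        funext a
        by_cases hax : a = x
        · rw [hax, G.2.2 x (fun h => (Finset.mem_erase.mp (Finset.mem_of_mem_erase h)).1 rfl),
            G'.2.2 x (fun h => (Finset.mem_erase.mp (Finset.mem_of_mem_erase h)).1 rfl)]
        · by_cases hay : a = y.1
          · rw [hay, G.2.2 y.1 (fun h => (Finset.mem_erase.mp h).1 rfl),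
              G'.2.2 y.1 (fun h => (Finset.mem_erase.mp h).1 rfl)]
          · have := hfun a
            rw [hΦdef] at this
            simp only [MatchOn.extend_apply, if_neg hax, if_neg hay] at this
            exact this
      have hG : G = G' := Subtype.ext hGeq
      rw [hG]
    have hcard : Nat.card (Σ y : {y // y ∈ s.erase x}, MatchOn ((s.erase x).erase y.1))
        ≤ Nat.card (MatchOn s) := Nat.card_le_card_of_injective Φ hinj
    have hDcard : Nat.card (Σ y : {y // y ∈ s.erase x}, MatchOn ((s.erase x).erase y.1))
        = ∑ y : {y // y ∈ s.erase x}, Nat.card (MatchOn ((s.erase x).erase y.1)) := by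
      rw [Nat.card_eq_fintype_card, Fintype.card_sigma]
      congr 1
      funext y
      rw [Nat.card_eq_fintype_card]
    have hsub : ∀ y : {y // y ∈ s.erase x},
        Nat.doubleFactorial (2 * k - 1) ≤ Nat.card (MatchOn ((s.erase x).erase y.1)) := by
      intro ⟨y, hy⟩
      apply ih
      rw [Finset.card_erase_of_mem hy, Finset.card_erase_of_mem hx, hs]
      omega
    have hsum : (2 * k + 1) * Nat.doubleFactorial (2 * k - 1)
        ≤ Nat.card (Σ y : {y // y ∈ s.erase x}, MatchOn ((s.erase x).erase y.1)) := by
      rw [hDcard]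
      calc (2 * k + 1) * Nat.doubleFactorial (2 * k - 1)
          = ∑ _y : {y // y ∈ s.erase x}, Nat.doubleFactorial (2 * k - 1) := by
            rw [Finset.sum_const, smul_eq_mul]
            congr 1
            rw [Finset.card_univ, Fintype.card_coe, Finset.card_erase_of_mem hx, hs]
            omega
        _ ≤ _ := Finset.sum_le_sum (fun y _ => hsub y)
    have hdf : Nat.doubleFactorial (2 * (k + 1) - 1)
        = (2 * k + 1) * Nat.doubleFactorial (2 * k - 1) := by
      cases k with
      | zero => rfl
      | succ m =>
        have h2 : 2 * (m + 1 + 1) - 1 = (2 * (m + 1) - 1) + 2 := by omega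
        rw [h2, Nat.doubleFactorial_add_two]
        have h3 : 2 * (m + 1) - 1 + 2 = 2 * (m + 1) + 1 := by omega
        rw [h3]
    rw [hdf]
    exact le_trans hsum hcard



section Rot

/-- the 6 permutations of `Fin 4` sending `a` to `b`, as an injection from `Fin 6`. -/
noncomputable def sigmaEmb (a b : Fin 4) : Fin 6 → Equiv.Perm (Fin 4) :=
  fun i => (Equiv.swap a b) *
    (Equiv.Perm.ofSubtype ((Fintype.equivFinOfCardEq
      (by rw [Fintype.card_perm]; simp; rfl : Fintype.card (Equiv.Perm {x : Fin 4 // x ≠ a}) = 6)).symm i))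

theorem sigmaEmb_apply (a b : Fin 4) (i : Fin 6) : sigmaEmb a b i a = b := by
  unfold sigmaEmb
  simp only [Equiv.Perm.mul_apply]
  have h1 : (Equiv.Perm.ofSubtype ((Fintype.equivFinOfCardEq
      (by rw [Fintype.card_perm]; simp; rfl : Fintype.card (Equiv.Perm {x : Fin 4 // x ≠ a}) = 6)).symm i)) a = a :=
    Equiv.Perm.ofSubtype_apply_of_not_mem _ (by simp : ¬ (a ≠ a))
  rw [h1]
  exact Equiv.swap_apply_left a b

theorem sigmaEmb_injective (a b : Fin 4) : Function.Injective (sigmaEmb a b) := by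
  intro i j h
  unfold sigmaEmb at h
  have h2 := mul_left_cancel h
  have h3 : ∀ (σ τ : Equiv.Perm {x : Fin 4 // x ≠ a}),
      Equiv.Perm.ofSubtype σ = Equiv.Perm.ofSubtype τ → σ = τ := by
    intro σ τ hst
    apply Equiv.ext
    rintro ⟨x, hx⟩
    apply Subtype.ext
    have := congrArg (fun (p : Equiv.Perm (Fin 4)) => p x) hst
    rw [Equiv.Perm.ofSubtype_apply_of_mem σ hx, Equiv.Perm.ofSubtype_apply_of_mem τ hx] at this
    exact this
  have h4 := h3 _ _ h2
  exact (Fintype.equivFinOfCardEq _).symm.injective h4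

end Rot

section Glue

variable {n : ℕ}

abbrev XF (n : ℕ) := Fin n × Fin 4

def ValidGlue (μ : Equiv.Perm (XF n)) : Prop := (∀ x, μ (μ x) = x) ∧ ∀ x, μ x ≠ x

def ConnGlue (μ : Equiv.Perm (XF n)) : Prop :=
  (SimpleGraph.fromRel (fun t t' => ∃ i : Fin 4, (μ (t, i)).1 = t')).Connected

/-- set of connected gluings -/
def GlueSet (n : ℕ) : Type := {μ : Equiv.Perm (XF n) // ValidGlue μ ∧ ConnGlue μ}

instance : Finite (GlueSet n) := by unfold GlueSet; infer_instance

/-- rank predicate for choosing a representative in each glued pair -/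
def IsRep (μ : Equiv.Perm (XF n)) (x : XF n) : Prop :=
  finProdFinEquiv x < finProdFinEquiv (μ x)

instance (μ : Equiv.Perm (XF n)) : DecidablePred (IsRep μ) := fun _ => by
  unfold IsRep; infer_instance

theorem isRep_of_not {μ : Equiv.Perm (XF n)} (hμ : ValidGlue μ) {x : XF n}
    (h : ¬ IsRep μ x) : IsRep μ (μ x) := by
  unfold IsRep at *
  rw [hμ.1 x]
  rcases lt_trichotomy (finProdFinEquiv x) (finProdFinEquiv (μ x)) with h1 | h1 | h1
  · exact absurd h1 h
  · exact absurd (finProdFinEquiv.injective h1) (fun hh => hμ.2 x hh.symm)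
  · exact h1

theorem not_isRep_of_isRep {μ : Equiv.Perm (XF n)} (hμ : ValidGlue μ) {x : XF n}
    (h : IsRep μ x) : ¬ IsRep μ (μ x) := by
  unfold IsRep at *
  rw [hμ.1 x]
  exact lt_asymm h

theorem card_reps {μ : Equiv.Perm (XF n)} (hμ : ValidGlue μ) :
    Fintype.card {x : XF n // IsRep μ x} = 2 * n := by
  classical
  have key : ∀ x : XF n, (decide (IsRep μ x) = true) ↔ IsRep μ x := fun x => decide_eq_true_iff
  set s : Finset (XF n) := Finset.univ.filter (IsRep μ) with hs
  set t : Finset (XF n) := Finset.univ.filter (fun x => ¬ IsRep μ x) with ht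
  have hst : s.card = t.card := by
    apply Finset.card_bij (fun x _ => μ x)
    · intro a ha
      rw [ht, Finset.mem_filter]
      refine ⟨Finset.mem_univ _, not_isRep_of_isRep hμ ?_⟩
      rw [hs, Finset.mem_filter] at ha
      exact ha.2
    · intro a ha b hb hab
      exact μ.injective hab
    · intro b hb
      refine ⟨μ b, ?_, hμ.1 b⟩
      rw [hs, Finset.mem_filter]
      rw [ht, Finset.mem_filter] at hb
      exact ⟨Finset.mem_univ _, isRep_of_not hμ hb.2⟩
  have hdisj : Disjoint s t := by
    rw [Finset.disjoint_filter]
    intro x _ hx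
    simpa using hx
  have hunion : s ∪ t = Finset.univ := by
    rw [hs, ht, Finset.filter_union_filter_not_eq]
  have htot : s.card + t.card = 4 * n := by
    rw [← Finset.card_union_of_disjoint hdisj, hunion, Finset.card_univ]
    simp [Fintype.card_prod]
    ring
  rw [Fintype.card_subtype]
  have hss : Finset.univ.filter (fun x => IsRep μ x) = s := rfl
  rw [hss]
  omega

end Glue

section Build
variable {n : ℕ}

instance : Finite (CombinatorialTriangulation n) := by
  apply Finite.of_injective
    (fun T => ((T.glue, T.rot) : Equiv.Perm (XF n) × (XF n → Equiv.Perm (Fin 4))))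
  rintro ⟨g, gi, gf, r, ro, ri⟩ ⟨g', gi', gf', r', ro', ri'⟩ h
  simp only [Prod.mk.injEq] at h
  obtain ⟨h1, h2⟩ := h
  subst h1; subst h2
  rfl

noncomputable def AFun (μ : GlueSet n) (r : {x : XF n // IsRep μ.1 x} → Fin 6)
    (z : {x : XF n // IsRep μ.1 x}) : Equiv.Perm (Fin 4) :=
  sigmaEmb z.1.2 (μ.1 z.1).2 (r z)

noncomputable def rotFun (μ : GlueSet n) (r : {x : XF n // IsRep μ.1 x} → Fin 6)
    (x : XF n) : Equiv.Perm (Fin 4) :=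
  if h : IsRep μ.1 x then AFun μ r ⟨x, h⟩
  else (AFun μ r ⟨μ.1 x, isRep_of_not μ.2.1 h⟩)⁻¹

noncomputable def buildT (μ : GlueSet n) (r : {x : XF n // IsRep μ.1 x} → Fin 6) :
    CombinatorialTriangulation n where
  glue := μ.1
  glue_involutive := μ.2.1.1
  glue_fixedPointFree := μ.2.1.2
  rot := rotFun μ r
  rot_opp := by
    intro x
    unfold rotFun
    split_ifs with h
    · exact sigmaEmb_apply _ _ _
    · have hs : AFun μ r ⟨μ.1 x, isRep_of_not μ.2.1 h⟩ (μ.1 x).2 = (μ.1 (μ.1 x)).2 :=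
        sigmaEmb_apply _ _ _
      have h2 : AFun μ r ⟨μ.1 x, isRep_of_not μ.2.1 h⟩ (μ.1 x).2 = x.2 := by
        rw [hs, μ.2.1.1 x]
      rw [← h2]
      exact Equiv.symm_apply_apply _ _
  rot_inverse := by
    intro x
    unfold rotFun
    by_cases h : IsRep μ.1 x
    · rw [dif_neg (not_isRep_of_isRep μ.2.1 h), dif_pos h]
      congr 1
      exact congrArg (AFun μ r) (Subtype.ext (μ.2.1.1 x))
    · rw [dif_pos (isRep_of_not μ.2.1 h), dif_neg h, inv_inv]

noncomputable def ΦT : (Σ μ : GlueSet n, ({x : XF n // IsRep μ.1 x} → Fin 6)) →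
    {T : CombinatorialTriangulation n // IsConnectedTriangulation T} :=
  fun d => ⟨buildT d.1 d.2, d.1.2.2⟩

theorem ΦT_inj : Function.Injective (ΦT (n := n)) := by
  rintro ⟨μ, r⟩ ⟨μ', r'⟩ heq
  have h0 : buildT μ r = buildT μ' r' := congrArg Subtype.val heq
  have hg : μ.1 = μ'.1 := congrArg CombinatorialTriangulation.glue h0
  have hμ : μ = μ' := Subtype.ext hg
  subst hμ
  have hrot : rotFun μ r = rotFun μ r' := congrArg CombinatorialTriangulation.rot h0
  have hr : r = r' := by
    funext z
    have hz := congrFun hrot z.1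
    unfold rotFun at hz
    rw [dif_pos z.2, dif_pos z.2] at hz
    unfold AFun at hz
    have := sigmaEmb_injective _ _ hz
    simpa using this
  rw [hr]

theorem glue_card_bound :
    Nat.card (GlueSet n) * 6 ^ (2 * n) ≤
      Nat.card {T : CombinatorialTriangulation n // IsConnectedTriangulation T} := by
  classical
  have hle := Nat.card_le_card_of_injective _ (ΦT_inj (n := n))
  letI : Fintype (GlueSet n) := Fintype.ofFinite _
  have hd : Nat.card (Σ μ : GlueSet n, ({x : XF n // IsRep μ.1 x} → Fin 6)) =
      Nat.card (GlueSet n) * 6 ^ (2 * n) := by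
    rw [Nat.card_eq_fintype_card, Fintype.card_sigma]
    have hstep : ∀ μ : GlueSet n, Fintype.card ({x : XF n // IsRep μ.1 x} → Fin 6) = 6 ^ (2 * n) := by
      intro μ
      rw [Fintype.card_fun, card_reps μ.2.1]
      simp
    rw [Finset.sum_congr rfl (fun μ _ => hstep μ), Finset.sum_const, smul_eq_mul,
      Finset.card_univ, Nat.card_eq_fintype_card]
  rw [hd] at hle
  exact hle

end Build

section Small

/-- the three pairings of the faces of one tetrahedron -/
def m1 : Fin 3 → Fin 4 → Fin 4 := ![![1,0,3,2], ![2,3,0,1], ![3,2,1,0]]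

def G1 (b : Fin 3) : XF 1 → XF 1 := fun x => (x.1, m1 b x.2)

theorem G1_invol (b : Fin 3) : Function.Involutive (G1 b) := by
  intro x
  have : ∀ (b : Fin 3) (x : XF 1), G1 b (G1 b x) = x := by decide
  exact this b x

noncomputable def μ1 (b : Fin 3) : Equiv.Perm (XF 1) := (G1_invol b).toPerm

theorem μ1_apply (b : Fin 3) (x : XF 1) : μ1 b x = G1 b x := rfl

theorem μ1_valid (b : Fin 3) : ValidGlue (μ1 b) := by
  constructor
  · exact G1_invol b
  · have : ∀ (b : Fin 3) (x : XF 1), G1 b x ≠ x := by decide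
    exact fun x => this b x

theorem conn_of_fin1 (μ : Equiv.Perm (XF 1)) : ConnGlue μ := by
  constructor
  · intro u v
    have : u = v := Subsingleton.elim u v
    rw [this]

theorem card_glueSet_one : 3 ≤ Nat.card (GlueSet 1) := by
  have hinj : Function.Injective (fun b : Fin 3 =>
      (⟨μ1 b, μ1_valid b, conn_of_fin1 _⟩ : GlueSet 1)) := by
    intro b b' h
    have h2 : μ1 b = μ1 b' := congrArg Subtype.val h
    have h3 : G1 b ((0 : Fin 1), (0 : Fin 4)) = G1 b' ((0:Fin 1), (0:Fin 4)) := by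
      rw [← μ1_apply, ← μ1_apply, h2]
    revert h3
    revert b b'
    decide
  have := Nat.card_le_card_of_injective _ hinj
  rwa [Nat.card_eq_fintype_card (α := Fin 3), Fintype.card_fin] at this

/-- data for the `n = 2` family: two faces of tetrahedron `0`, two faces of
tetrahedron `1`, and a way to match them up. -/
abbrev D2 : Type := {q : Fin 4 × Fin 4 // q.1 < q.2} × {q : Fin 4 × Fin 4 // q.1 < q.2} × Bool

/-- the face of `Fin 4` other than the three arguments (for distinct arguments) -/
def comp3 (a b i : Fin 4) : Fin 4 := ⟨(6 - a.1 - b.1 - i.1) % 4, Nat.mod_lt _ (by omega)⟩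

def G2 (d : D2) : XF 2 → XF 2 := fun x =>
  let a1 := d.1.1.1
  let a2 := d.1.1.2
  let e1 := if d.2.2 then d.2.1.1.1 else d.2.1.1.2
  let e2 := if d.2.2 then d.2.1.1.2 else d.2.1.1.1
  if x.1 = 0 then
    (if x.2 = a1 then ((1 : Fin 2), e1) else if x.2 = a2 then (1, e2) else (0, comp3 a1 a2 x.2))
  else
    (if x.2 = e1 then ((0 : Fin 2), a1) else if x.2 = e2 then (0, a2) else (1, comp3 e1 e2 x.2))

theorem G2_invol (d : D2) : Function.Involutive (G2 d) := by
  intro x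
  have : ∀ (d : D2) (x : XF 2), G2 d (G2 d x) = x := by decide
  exact this d x

noncomputable def μ2 (d : D2) : Equiv.Perm (XF 2) := (G2_invol d).toPerm

theorem μ2_apply (d : D2) (x : XF 2) : μ2 d x = G2 d x := rfl

theorem μ2_valid (d : D2) : ValidGlue (μ2 d) := by
  constructor
  · exact G2_invol d
  · have : ∀ (d : D2) (x : XF 2), G2 d x ≠ x := by decide
    exact fun x => this d x

theorem μ2_conn (d : D2) : ConnGlue (μ2 d) := by
  have hadj : (SimpleGraph.fromRel (fun t t' => ∃ i : Fin 4, ((μ2 d) (t, i)).1 = t')).Adj 0 1 := by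
    rw [SimpleGraph.fromRel_adj]
    refine ⟨by decide, Or.inl ⟨d.1.1.1, ?_⟩⟩
    rw [μ2_apply]
    have : ∀ d : D2, (G2 d (0, d.1.1.1)).1 = 1 := by decide
    exact this d
  constructor
  · intro u v
    fin_cases u <;> fin_cases v
    · rfl
    · exact hadj.reachable
    · exact hadj.symm.reachable
    · rfl

theorem card_glueSet_two : 60 ≤ Nat.card (GlueSet 2) := by
  have hinj : Function.Injective (fun d : D2 =>
      (⟨μ2 d, μ2_valid d, μ2_conn d⟩ : GlueSet 2)) := by
    intro d d' h
    have h2 : μ2 d = μ2 d' := congrArg Subtype.val h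
    have h3 : ∀ x, G2 d x = G2 d' x := by
      intro x
      rw [← μ2_apply, ← μ2_apply, h2]
    have key : ∀ (d d' : D2), (∀ x, G2 d x = G2 d' x) → d = d' := by decide
    exact key d d' h3
  have hle : Nat.card D2 ≤ Nat.card (GlueSet 2) := Nat.card_le_card_of_injective _ hinj
  have hD2 : Nat.card D2 = 72 := by
    rw [Nat.card_eq_fintype_card]
    decide
  omega

end Small

section FamA

/-- data for the tadpole family: an ordering of the tetrahedra, a cycle entry point
`l ≠ 0`, an in-face (among the three nonzero faces) for each non-initial position,
and a choice of second in-face at the cycle entry. -/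
abbrev TadData (m : ℕ) : Type :=
  Equiv.Perm (Fin (m+3)) × {k : Fin (m+3) // k ≠ 0} ×
    ({k : Fin (m+3) // k ≠ 0} → Fin 3) × Fin 2

variable {m : ℕ}

/-- the element of `Fin 3` other than `c`, selected by `e` -/
def oth (c : Fin 3) (e : Fin 2) : Fin 3 :=
  if e = 0 then (if c = 0 then 1 else 0) else (if c = 2 then 1 else 2)

theorem oth_ne (c : Fin 3) (e : Fin 2) : oth c e ≠ c := by revert c e; decide

theorem oth_inj (c : Fin 3) (e e' : Fin 2) (h : oth c e = oth c e') : e = e' := by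
  revert c e e'; decide

/-- the in-face of the tetrahedron at position `k` (junk value for `k = 0`) -/
def faceIn (d : TadData m) (k : Fin (m+3)) : Fin 4 :=
  if h : k = 0 then 1 else (d.2.2.1 ⟨k, h⟩).succ

/-- the second in-face at the cycle entry position -/
def dface (d : TadData m) : Fin 4 := (oth (d.2.2.1 d.2.1) d.2.2.2).succ

theorem faceIn_ne_zero (d : TadData m) (k : Fin (m+3)) : faceIn d k ≠ 0 := by
  unfold faceIn
  split_ifs with h
  · decide
  · exact Fin.succ_ne_zero _

theorem dface_ne_zero (d : TadData m) : dface d ≠ 0 := Fin.succ_ne_zero _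

theorem dface_ne_faceIn (d : TadData m) : dface d ≠ faceIn d d.2.1.1 := by
  unfold dface faceIn
  rw [dif_neg d.2.1.2]
  intro h
  have h2 := Fin.succ_injective _ h
  have : (⟨d.2.1.1, d.2.1.2⟩ : {k : Fin (m+3) // k ≠ 0}) = d.2.1 := Subtype.ext rfl
  rw [this] at h2
  exact oth_ne _ _ h2

def lastP : Fin (m+3) := ⟨m + 2, by omega⟩

def prevP (k : Fin (m+3)) : Fin (m+3) := ⟨k.val - 1, by omega⟩

/-- where the `0`-face of the tetrahedron at position `k` points -/
def tgtF (d : TadData m) (k : Fin (m+3)) : XF (m+3) :=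
  if h : (k : ℕ) + 1 < m + 3 then (d.1 ⟨k.val + 1, h⟩, faceIn d ⟨k.val + 1, h⟩)
  else (d.1 d.2.1.1, dface d)

theorem tgtF_snd_ne_zero (d : TadData m) (k : Fin (m+3)) : (tgtF d k).2 ≠ 0 := by
  unfold tgtF
  split_ifs with h
  · exact faceIn_ne_zero d ⟨k.val + 1, h⟩
  · exact dface_ne_zero d

theorem tgtF_injective (d : TadData m) : Function.Injective (tgtF d) := by
  intro k k' h
  unfold tgtF at h
  split_ifs at h with h1 h2 h2
  · have h3 := congrArg Prod.fst h
    simp only at h3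
    have h4 := d.1.injective h3
    have h5 : k.val + 1 = k'.val + 1 := congrArg Fin.val h4
    exact Fin.ext (by omega)
  · exfalso
    have h3 := d.1.injective (congrArg Prod.fst h)
    have h4 := congrArg Prod.snd h
    simp only at h4
    rw [h3] at h4
    exact dface_ne_faceIn d h4.symm
  · exfalso
    have h3 := d.1.injective (congrArg Prod.fst h)
    have h4 := congrArg Prod.snd h
    simp only at h4
    rw [← h3] at h4
    exact dface_ne_faceIn d h4
  · have : k.val = m + 2 := by omega
    have : k.val = k'.val := by omega
    exact Fin.ext this

def srcSet : Finset (XF (m+3)) := Finset.univ.image (fun t : Fin (m+3) => (t, (0 : Fin 4)))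

def tgtSet (d : TadData m) : Finset (XF (m+3)) := Finset.univ.image (tgtF d)

def leftSet (d : TadData m) : Finset (XF (m+3)) := Finset.univ \ (srcSet ∪ tgtSet d)

theorem leftSet_card (d : TadData m) : (leftSet d).card = 2 * (m + 3) := by
  have hsrc : (srcSet (m := m)).card = m + 3 := by
    rw [srcSet, Finset.card_image_of_injective _ (fun a b h => congrArg Prod.fst h),
      Finset.card_univ, Fintype.card_fin]
  have htgt : (tgtSet d).card = m + 3 := by
    rw [tgtSet, Finset.card_image_of_injective _ (tgtF_injective d),
      Finset.card_univ, Fintype.card_fin]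
  have hdisj : Disjoint (srcSet (m := m)) (tgtSet d) := by
    rw [Finset.disjoint_left]
    intro a ha hb
    rw [srcSet, Finset.mem_image] at ha
    rw [tgtSet, Finset.mem_image] at hb
    obtain ⟨t, _, rfl⟩ := ha
    obtain ⟨k, _, hk⟩ := hb
    exact tgtF_snd_ne_zero d k (by rw [hk])
  have hsub : (srcSet ∪ tgtSet d) ⊆ Finset.univ := Finset.subset_univ _
  rw [leftSet, Finset.card_sdiff_of_subset hsub, Finset.card_union_of_disjoint hdisj, hsrc, htgt,
    Finset.card_univ]
  simp [Fintype.card_prod]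
  omega

/-- the gluing map of the tadpole family -/
def GAf (d : TadData m) (g : MatchOn (leftSet d)) : XF (m+3) → XF (m+3) := fun x =>
  let k := d.1.symm x.1
  if x.2 = 0 then tgtF d k
  else if k ≠ 0 ∧ x.2 = faceIn d k then (d.1 (prevP k), 0)
  else if k = d.2.1.1 ∧ x.2 = dface d then (d.1 lastP, 0)
  else g.1 x

theorem GAf_src (d : TadData m) (g : MatchOn (leftSet d)) (k : Fin (m+3)) :
    GAf d g (d.1 k, 0) = tgtF d k := by
  unfold GAf
  simp only [Equiv.symm_apply_apply, if_true]

theorem GAf_tgt1 (d : TadData m) (g : MatchOn (leftSet d)) (k : Fin (m+3)) (hk : k ≠ 0) :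
    GAf d g (d.1 k, faceIn d k) = (d.1 (prevP k), 0) := by
  unfold GAf
  simp only [Equiv.symm_apply_apply]
  rw [if_neg (faceIn_ne_zero d k)]
  rw [if_pos (show k ≠ 0 ∧ True from ⟨hk, trivial⟩)]

theorem GAf_tgt2 (d : TadData m) (g : MatchOn (leftSet d)) :
    GAf d g (d.1 d.2.1.1, dface d) = (d.1 lastP, 0) := by
  unfold GAf
  simp only [Equiv.symm_apply_apply]
  rw [if_neg (dface_ne_zero d)]
  rw [if_neg (fun hh : d.2.1.1 ≠ 0 ∧ dface d = faceIn d d.2.1.1 => dface_ne_faceIn d hh.2)]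
  rw [if_pos (show True ∧ True from ⟨trivial, trivial⟩)]

/-- a face not matching any of the three pointer branches is a leftover face -/
theorem mem_leftSet_of_branches (d : TadData m) (x : XF (m+3))
    (h0 : x.2 ≠ 0)
    (h1 : ¬ (d.1.symm x.1 ≠ 0 ∧ x.2 = faceIn d (d.1.symm x.1)))
    (h2 : ¬ (d.1.symm x.1 = d.2.1.1 ∧ x.2 = dface d)) :
    x ∈ leftSet d := by
  rw [leftSet, Finset.mem_sdiff]
  refine ⟨Finset.mem_univ _, ?_⟩
  rw [Finset.mem_union]
  rintro (hs | ht)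
  · rw [srcSet, Finset.mem_image] at hs
    obtain ⟨t, _, ht⟩ := hs
    exact h0 (by rw [← ht])
  · rw [tgtSet, Finset.mem_image] at ht
    obtain ⟨k, _, hk⟩ := ht
    rw [tgtF] at hk
    split_ifs at hk with hlt
    · apply h1
      have hx1 : x.1 = d.1 ⟨k.val + 1, hlt⟩ := by rw [← hk]
      have hsy : d.1.symm x.1 = ⟨k.val + 1, hlt⟩ := by rw [hx1, Equiv.symm_apply_apply]
      constructor
      · rw [hsy]
        intro hh
        have := congrArg Fin.val hh
        simp at this
      · rw [hsy, ← hk]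
    · apply h2
      have hx1 : x.1 = d.1 d.2.1.1 := by rw [← hk]
      have hsy : d.1.symm x.1 = d.2.1.1 := by rw [hx1, Equiv.symm_apply_apply]
      exact ⟨hsy, by rw [← hk]⟩

/-- conversely, a face matching branch 2 is the target `tgtF d (prevP k)` -/
theorem eq_tgtF_of_branch1 (d : TadData m) (x : XF (m+3))
    (h1 : d.1.symm x.1 ≠ 0) (h2 : x.2 = faceIn d (d.1.symm x.1)) :
    x = tgtF d (prevP (d.1.symm x.1)) := by
  set k := d.1.symm x.1 with hk
  have hkv : (k : ℕ) ≠ 0 := fun hh => h1 (Fin.ext hh)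
  have hlt : (prevP k : ℕ) + 1 < m + 3 := by
    have := k.isLt
    simp only [prevP]
    omega
  have hpk : (⟨(prevP k : ℕ) + 1, hlt⟩ : Fin (m+3)) = k := by
    apply Fin.ext
    simp only [prevP]
    omega
  rw [tgtF, dif_pos hlt, hpk]
  have hx1 : x.1 = d.1 k := by rw [hk, Equiv.apply_symm_apply]
  exact Prod.ext hx1 h2

theorem eq_tgtF_of_branch2 (d : TadData m) (x : XF (m+3))
    (h1 : d.1.symm x.1 = d.2.1.1) (h2 : x.2 = dface d) :
    x = tgtF d lastP := by
  have hnlt : ¬ ((lastP (m := m) : ℕ) + 1 < m + 3) := by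
    simp only [lastP]
    omega
  rw [tgtF, dif_neg hnlt]
  have hx1 : x.1 = d.1 d.2.1.1 := by rw [← h1, Equiv.apply_symm_apply]
  exact Prod.ext hx1 h2

theorem GAf_left (d : TadData m) (g : MatchOn (leftSet d)) (x : XF (m+3))
    (hx : x ∈ leftSet d) : GAf d g x = g.1 x := by
  have hns : x ∉ srcSet ∧ x ∉ tgtSet d := by
    rw [leftSet, Finset.mem_sdiff, Finset.mem_union] at hx
    exact ⟨fun h => hx.2 (Or.inl h), fun h => hx.2 (Or.inr h)⟩
  have h0 : x.2 ≠ 0 := by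
    intro hh
    apply hns.1
    rw [srcSet, Finset.mem_image]
    exact ⟨x.1, Finset.mem_univ _, by rw [← hh]⟩
  have h1 : ¬ (d.1.symm x.1 ≠ 0 ∧ x.2 = faceIn d (d.1.symm x.1)) := by
    rintro ⟨ha, hb⟩
    apply hns.2
    rw [tgtSet, Finset.mem_image]
    exact ⟨_, Finset.mem_univ _, (eq_tgtF_of_branch1 d x ha hb).symm⟩
  have h2 : ¬ (d.1.symm x.1 = d.2.1.1 ∧ x.2 = dface d) := by
    rintro ⟨ha, hb⟩
    apply hns.2
    rw [tgtSet, Finset.mem_image]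
    exact ⟨_, Finset.mem_univ _, (eq_tgtF_of_branch2 d x ha hb).symm⟩
  unfold GAf
  rw [if_neg h0, if_neg h1, if_neg h2]

theorem GAf_invol (d : TadData m) (g : MatchOn (leftSet d)) :
    Function.Involutive (GAf d g) := by
  intro x
  by_cases h0 : x.2 = 0
  · have hx : x = (d.1 (d.1.symm x.1), 0) := by
      rw [Equiv.apply_symm_apply]
      exact Prod.ext rfl h0
    rw [hx]
    set k := d.1.symm x.1 with hk
    rw [GAf_src d g k]
    by_cases hlt : (k : ℕ) + 1 < m + 3
    · rw [tgtF, dif_pos hlt]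
      have hne : (⟨(k : ℕ) + 1, hlt⟩ : Fin (m+3)) ≠ 0 := by
        intro hh
        have := congrArg Fin.val hh
        simp at this
      have hpk : prevP (⟨(k : ℕ) + 1, hlt⟩ : Fin (m+3)) = k := Fin.ext (by simp [prevP])
      rw [GAf_tgt1 d g _ hne, hpk]
    · rw [tgtF, dif_neg hlt]
      have hlk : lastP (m := m) = k := by
        apply Fin.ext
        simp only [lastP]
        have := k.isLt
        omega
      rw [GAf_tgt2 d g, hlk]
  · by_cases h1 : d.1.symm x.1 ≠ 0 ∧ x.2 = faceIn d (d.1.symm x.1)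
    · have hx : x = (d.1 (d.1.symm x.1), faceIn d (d.1.symm x.1)) := by
        rw [Equiv.apply_symm_apply]
        exact Prod.ext rfl h1.2
      nth_rewrite 1 [hx]
      rw [GAf_tgt1 d g _ h1.1, GAf_src d g _]
      exact (eq_tgtF_of_branch1 d x h1.1 h1.2).symm
    · by_cases h2 : d.1.symm x.1 = d.2.1.1 ∧ x.2 = dface d
      · have hx : x = (d.1 d.2.1.1, dface d) := by
          rw [← h2.1, Equiv.apply_symm_apply]
          exact Prod.ext rfl h2.2
        nth_rewrite 1 [hx]
        rw [GAf_tgt2 d g, GAf_src d g _]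
        exact (eq_tgtF_of_branch2 d x h2.1 h2.2).symm
      · have hxl : x ∈ leftSet d := mem_leftSet_of_branches d x h0 h1 h2
        rw [GAf_left d g x hxl]
        obtain ⟨hgx, hggx, _⟩ := g.2.1 x hxl
        rw [GAf_left d g _ hgx]
        exact hggx

theorem GAf_ffp (d : TadData m) (g : MatchOn (leftSet d)) (x : XF (m+3)) :
    GAf d g x ≠ x := by
  by_cases h0 : x.2 = 0
  · intro hh
    have h2 := congrArg Prod.snd hh
    unfold GAf at h2
    rw [if_pos h0] at h2
    exact tgtF_snd_ne_zero d _ (by rw [h2, h0])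
  · unfold GAf
    rw [if_neg h0]
    split_ifs with h1 h2
    · intro hh
      exact h0 (by rw [← congrArg Prod.snd hh])
    · intro hh
      exact h0 (by rw [← congrArg Prod.snd hh])
    · have hxl : x ∈ leftSet d := mem_leftSet_of_branches d x h0 h1 h2
      exact (g.2.1 x hxl).2.2

noncomputable def μA (d : TadData m) (g : MatchOn (leftSet d)) : Equiv.Perm (XF (m+3)) :=
  (GAf_invol d g).toPerm

theorem μA_apply (d : TadData m) (g : MatchOn (leftSet d)) (x : XF (m+3)) :
    μA d g x = GAf d g x := rfl

theorem μA_valid (d : TadData m) (g : MatchOn (leftSet d)) : ValidGlue (μA d g) :=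
  ⟨GAf_invol d g, GAf_ffp d g⟩

theorem μA_conn (d : TadData m) (g : MatchOn (leftSet d)) : ConnGlue (μA d g) := by
  set G := SimpleGraph.fromRel (fun t t' => ∃ i : Fin 4, ((μA d g) (t, i)).1 = t') with hG
  have key : ∀ j (hj : j < m + 3), G.Reachable (d.1 ⟨0, by omega⟩) (d.1 ⟨j, hj⟩) := by
    intro j
    induction j with
    | zero => intro hj; rfl
    | succ j ihj =>
      intro hj
      have hj' : j < m + 3 := by omega
      refine (ihj hj').trans ?_
      have hadj : G.Adj (d.1 ⟨j, hj'⟩) (d.1 ⟨j + 1, hj⟩) := by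
        rw [hG, SimpleGraph.fromRel_adj]
        constructor
        · intro hh
          have := congrArg Fin.val (d.1.injective hh)
          simp at this
        · left
          refine ⟨0, ?_⟩
          rw [μA_apply, GAf_src, tgtF, dif_pos (show ((⟨j, hj'⟩ : Fin (m+3)) : ℕ) + 1 < m + 3 from hj)]
      exact hadj.reachable
  constructor
  intro u v
  have hu : G.Reachable (d.1 ⟨0, by omega⟩) u := by
    have h1 := key (d.1.symm u).val (d.1.symm u).isLt
    have h2 : (⟨(d.1.symm u).val, (d.1.symm u).isLt⟩ : Fin (m+3)) = d.1.symm u := Fin.eta _ _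
    rw [h2, Equiv.apply_symm_apply] at h1
    exact h1
  have hv : G.Reachable (d.1 ⟨0, by omega⟩) v := by
    have h1 := key (d.1.symm v).val (d.1.symm v).isLt
    have h2 : (⟨(d.1.symm v).val, (d.1.symm v).isLt⟩ : Fin (m+3)) = d.1.symm v := Fin.eta _ _
    rw [h2, Equiv.apply_symm_apply] at h1
    exact h1
  exact hu.symm.trans hv

theorem tgtF_fst_ne_p0 (d : TadData m) (k : Fin (m+3)) : (tgtF d k).1 ≠ d.1 0 := by
  unfold tgtF
  split_ifs with hlt
  · intro hh
    have h2 := d.1.injective hh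
    have h3 := congrArg Fin.val h2
    simp at h3
  · intro hh
    exact d.2.1.2 (d.1.injective hh)

theorem exists_src_hit (d : TadData m) (g : MatchOn (leftSet d)) (t : Fin (m+3))
    (ht : t ≠ d.1 0) : ∃ s, (GAf d g (s, 0)).1 = t := by
  set j := d.1.symm t with hj
  have hj0 : j ≠ 0 := by
    intro hh
    apply ht
    rw [hj] at hh
    rw [← Equiv.apply_symm_apply d.1 t, hh]
  have hjv : (j : ℕ) ≠ 0 := fun hh => hj0 (Fin.ext (by simpa using hh))
  refine ⟨d.1 (prevP j), ?_⟩
  rw [GAf_src]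
  have hlt : ((prevP j : Fin (m+3)) : ℕ) + 1 < m + 3 := by
    have := j.isLt
    simp only [prevP]
    omega
  rw [tgtF, dif_pos hlt]
  have hpj : (⟨((prevP j : Fin (m+3)) : ℕ) + 1, hlt⟩ : Fin (m+3)) = j := by
    apply Fin.ext
    simp only [prevP]
    omega
  rw [hpj]
  simp only [hj, Equiv.apply_symm_apply]

noncomputable def ΦA : (Σ d : TadData m, MatchOn (leftSet d)) → GlueSet (m+3) :=
  fun dg => ⟨μA dg.1 dg.2, μA_valid _ _, μA_conn _ _⟩

theorem ΦA_inj : Function.Injective (ΦA (m := m)) := by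
  rintro ⟨d, g⟩ ⟨d', g'⟩ heq
  have h : ∀ x, GAf d g x = GAf d' g' x := by
    intro x
    have h2 : μA d g = μA d' g' := congrArg Subtype.val heq
    have h3 := congrArg (fun (e : Equiv.Perm (XF (m+3))) => e x) h2
    simpa [μA_apply] using h3
  -- step 0 : the images of the 0-faces determine p 0
  have hp0 : d.1 0 = d'.1 0 := by
    by_contra hne
    obtain ⟨s, hs⟩ := exists_src_hit d' g' (d.1 0) hne
    rw [← h] at hs
    have hs2 : s = d.1 (d.1.symm s) := (Equiv.apply_symm_apply d.1 s).symm
    rw [hs2, GAf_src] at hs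
    exact tgtF_fst_ne_p0 d _ hs
  -- step : consecutive positions
  have hstep : ∀ j (hj : j + 1 < m + 3) (hj' : j < m + 3),
      d.1 ⟨j, hj'⟩ = d'.1 ⟨j, hj'⟩ →
      d.1 ⟨j+1, hj⟩ = d'.1 ⟨j+1, hj⟩ ∧ faceIn d ⟨j+1, hj⟩ = faceIn d' ⟨j+1, hj⟩ := by
    intro j hj hj' hih
    have h1 := h (d.1 ⟨j, hj'⟩, 0)
    rw [GAf_src, hih, GAf_src] at h1
    rw [tgtF, tgtF, dif_pos (show ((⟨j, hj'⟩ : Fin (m+3)) : ℕ) + 1 < m + 3 from hj),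
      dif_pos (show ((⟨j, hj'⟩ : Fin (m+3)) : ℕ) + 1 < m + 3 from hj)] at h1
    exact ⟨congrArg Prod.fst h1, congrArg Prod.snd h1⟩
  have hall : ∀ j (hj : j < m + 3), d.1 ⟨j, hj⟩ = d'.1 ⟨j, hj⟩ := by
    intro j
    induction j with
    | zero =>
      intro hj
      have hz : (⟨0, hj⟩ : Fin (m+3)) = 0 := by
        apply Fin.ext
        simp
      rw [hz]
      exact hp0
    | succ j ihj =>
      intro hj
      exact (hstep j hj (by omega) (ihj (by omega))).1
  have hpeq : d.1 = d'.1 := by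
    apply Equiv.ext
    intro k
    have := hall k.val k.isLt
    rwa [Fin.eta] at this
  have hfeq : ∀ k : Fin (m+3), k ≠ 0 → faceIn d k = faceIn d' k := by
    intro k hk
    have hkv : (k : ℕ) ≠ 0 := fun hh => hk (Fin.ext (by simpa using hh))
    have hj : ((k : ℕ) - 1) + 1 < m + 3 := by
      have := k.isLt
      omega
    have h2 := (hstep ((k : ℕ) - 1) hj (by omega) (hall _ _)).2
    have h3 : (⟨(k : ℕ) - 1 + 1, hj⟩ : Fin (m+3)) = k := Fin.ext (by simp; omega)
    rwa [h3] at h2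
  have hγeq : d.2.2.1 = d'.2.2.1 := by
    funext z
    obtain ⟨k, hk⟩ := z
    have h2 := hfeq k hk
    unfold faceIn at h2
    rw [dif_neg hk, dif_neg hk] at h2
    exact Fin.succ_injective _ h2
  -- the last pointer
  have hlast := h (d.1 lastP, 0)
  rw [GAf_src, hpeq, GAf_src] at hlast
  have hnlt : ¬ ((lastP (m := m) : ℕ) + 1 < m + 3) := by simp [lastP]
  rw [tgtF, tgtF, dif_neg hnlt, dif_neg hnlt] at hlast
  have hleq : d.2.1 = d'.2.1 := by
    have h2 := congrArg Prod.fst hlast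
    simp only at h2
    rw [← hpeq] at h2
    exact Subtype.ext (d.1.injective h2)
  have hδeq : d.2.2.2 = d'.2.2.2 := by
    have h2 := congrArg Prod.snd hlast
    simp only at h2
    unfold dface at h2
    rw [← hγeq, ← hleq] at h2
    exact oth_inj _ _ _ (Fin.succ_injective _ h2)
  have hd : d = d' := Prod.ext hpeq (Prod.ext hleq (Prod.ext hγeq hδeq))
  subst hd
  have hg : g = g' := by
    apply Subtype.ext
    funext x
    by_cases hx : x ∈ leftSet d
    · rw [← GAf_left d g x hx, ← GAf_left d g' x hx]
      exact h x
    · rw [g.2.2 x hx, g'.2.2 x hx]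
  rw [hg]

theorem card_tadData (m : ℕ) :
    Nat.card (TadData m) = (m+3).factorial * ((m+2) * (3^(m+2) * 2)) := by
  rw [Nat.card_eq_fintype_card]
  rw [Fintype.card_prod, Fintype.card_prod, Fintype.card_prod]
  have h1 : Fintype.card (Equiv.Perm (Fin (m+3))) = (m+3).factorial := by
    rw [Fintype.card_perm, Fintype.card_fin]
  have h2 : Fintype.card {k : Fin (m+3) // k ≠ 0} = m + 2 := by
    rw [Fintype.card_subtype_compl, Fintype.card_fin, Fintype.card_subtype_eq]
    omega
  have h3 : Fintype.card ({k : Fin (m+3) // k ≠ 0} → Fin 3) = 3 ^ (m+2) := by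
    rw [Fintype.card_fun, h2, Fintype.card_fin]
  rw [h1, h2, h3, Fintype.card_fin]

theorem card_glueSet_A (m : ℕ) :
    (m+3).factorial * ((m+2) * (3^(m+2) * 2)) * Nat.doubleFactorial (2*(m+3) - 1)
      ≤ Nat.card (GlueSet (m+3)) := by
  classical
  have hle : Nat.card (Σ d : TadData m, MatchOn (leftSet d)) ≤ Nat.card (GlueSet (m+3)) :=
    Nat.card_le_card_of_injective _ (ΦA_inj (m := m))
  refine le_trans ?_ hle
  rw [Nat.card_eq_fintype_card, Fintype.card_sigma]
  have hterm : ∀ d : TadData m,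
      Nat.doubleFactorial (2*(m+3) - 1) ≤ Fintype.card (MatchOn (leftSet d)) := by
    intro d
    have := matchOn_card_ge (m+3) (leftSet d) (leftSet_card d)
    rwa [Nat.card_eq_fintype_card] at this
  calc (m+3).factorial * ((m+2) * (3^(m+2) * 2)) * Nat.doubleFactorial (2*(m+3) - 1)
      = ∑ _d : TadData m, Nat.doubleFactorial (2*(m+3) - 1) := by
        rw [Finset.sum_const, smul_eq_mul, Finset.card_univ]
        have := card_tadData m
        rw [Nat.card_eq_fintype_card] at this
        rw [this]
    _ ≤ ∑ d : TadData m, Fintype.card (MatchOn (leftSet d)) :=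
        Finset.sum_le_sum (fun d _ => hterm d)

theorem numeric_A (m : ℕ) :
    (2*m+7).factorial ≤ 4*(m+2) * 3^(m+2) * (m+3).factorial * Nat.doubleFactorial (2*m+5) := by
  induction m with
  | zero => decide
  | succ m ih =>
    have e1 : 2*(m+1)+7 = (2*m+8)+1 := by ring
    have e2 : 2*m+8 = (2*m+7)+1 := by ring
    have e3 : 2*(m+1)+5 = (2*m+5)+2 := by ring
    have e4 : m+1+3 = (m+3)+1 := by ring
    have e5 : m+1+2 = (m+2)+1 := by ring
    rw [e1, Nat.factorial_succ, e2, Nat.factorial_succ, e3, Nat.doubleFactorial_add_two,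
      e4, Nat.factorial_succ, e5, pow_succ]
    -- goal : (2m+8+1) * ((2m+7+1) * (2m+7)!) ≤ 4*(m+1+2) * (3^(m+2)*3) * ((m+3+1)*(m+3)!) * ((2m+5+2) * (2m+5)‼)
    have key : ∀ A B C : ℕ,
        (2*m+7)! ≤ 4*(m+2) * A * B * C →
        (2*m+8+1) * ((2*m+7+1) * (2*m+7)!) ≤ 4*(m+1+2) * (A*3) * ((m+3+1)*B) * ((2*m+5+2) * C) := by
      intro A B C hiH
      calc (2*m+8+1) * ((2*m+7+1) * (2*m+7)!)
          ≤ (2*m+8+1) * ((2*m+7+1) * (4*(m+2) * A * B * C)) := by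
            apply Nat.mul_le_mul_left
            apply Nat.mul_le_mul_left
            exact hiH
        _ = ((2*m+9) * (2*m+8) * (4*(m+2))) * (A * (B * C)) := by ring
        _ ≤ ((4*(m+3)) * 3 * ((m+4) * (2*m+7))) * (A * (B * C)) := by
            apply Nat.mul_le_mul_right
            ring_nf
            nlinarith [sq_nonneg m, pow_le_pow_left₀ (Nat.zero_le m) (le_refl m) 3]
        _ = 4*(m+1+2) * (A*3) * ((m+3+1)*B) * ((2*m+5+2) * C) := by ring
    exact key _ _ _ ih

theorem card_glueSet_ge (n : ℕ) (hn : 1 ≤ n) :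
    (2*n+1).factorial ≤ 2 * Nat.card (GlueSet n) := by
  match n, hn with
  | 1, _ =>
    have := card_glueSet_one
    have h6 : (2*1+1).factorial = 6 := by decide
    rw [h6]
    omega
  | 2, _ =>
    have := card_glueSet_two
    have h120 : (2*2+1).factorial = 120 := by decide
    rw [h120]
    omega
  | (m+3), _ =>
    have h1 := card_glueSet_A m
    have h2 := numeric_A m
    have e1 : 2*(m+3)+1 = 2*m+7 := by ring
    have e2 : 2*(m+3) - 1 = 2*m+5 := by omega
    rw [e1]
    rw [e2] at h1
    calc (2*m+7).factorial ≤ 4*(m+2) * 3^(m+2) * (m+3).factorial * Nat.doubleFactorial (2*m+5) := h2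
      _ = 2 * ((m+3).factorial * ((m+2) * (3^(m+2) * 2)) * Nat.doubleFactorial (2*m+5)) := by ring
      _ ≤ 2 * Nat.card (GlueSet (m+3)) := by
          apply Nat.mul_le_mul_left
          exact h1

/-- For every `n ≥ 1`, the number of labelled connected combinatorial triangulations
of size `n` is at least `(2n+1)! · 6^(2n) / 2`. -/
theorem count_labelled_connected_triangulations_lower_bound (n : ℕ) (hn : 1 ≤ n) :
    ((Nat.factorial (2 * n + 1) : ℚ) * 6 ^ (2 * n)) / 2 ≤
      (Nat.card {T : CombinatorialTriangulation n // IsConnectedTriangulation T} : ℚ) := by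
  have h1 : (2*n+1).factorial * 6^(2*n) ≤
      2 * Nat.card {T : CombinatorialTriangulation n // IsConnectedTriangulation T} := by
    calc (2*n+1).factorial * 6^(2*n)
        ≤ (2 * Nat.card (GlueSet n)) * 6^(2*n) :=
          Nat.mul_le_mul_right _ (card_glueSet_ge n hn)
      _ = 2 * (Nat.card (GlueSet n) * 6^(2*n)) := by ring
      _ ≤ 2 * Nat.card {T : CombinatorialTriangulation n // IsConnectedTriangulation T} :=
          Nat.mul_le_mul_left _ glue_card_bound
  rw [div_le_iff₀ (by norm_num : (0:ℚ) < 2)]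
  have h2 : (2*n+1).factorial * 6^(2*n) ≤
      Nat.card {T : CombinatorialTriangulation n // IsConnectedTriangulation T} * 2 := by omega
  exact_mod_cast h2
end FamA
end

section
/- For every natural number n ≥ 1, the number of isomorphism classes of connected combinatorial triangulations of size n is at least (2n+1)! · 6^{2n} / (2 · n! · 24^n). -/
/-- Two combinatorial triangulations are isomorphic when some relabelling `π` of the
tetrahedra together with relabellings `ρ t` of the four vertices of each tetrahedron `t`
(an element of `Sₙ ⋉ (S₄)ⁿ`) carries the gluing data of one to the other. -/
def TriangulationIso {n : ℕ} (T T' : CombinatorialTriangulation n) : Prop :=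
  ∃ (π : Equiv.Perm (Fin n)) (ρ : Fin n → Equiv.Perm (Fin 4)),
    (∀ f : Fin n × Fin 4,
      T'.glue (π f.1, ρ f.1 f.2) = (π (T.glue f).1, ρ (T.glue f).1 (T.glue f).2)) ∧
    (∀ f : Fin n × Fin 4,
      T'.rot (π f.1, ρ f.1 f.2) = ρ (T.glue f).1 * T.rot f * (ρ f.1)⁻¹)

namespace CTAux

variable (n : ℕ)

def Allowed (f g : Fin n × Fin 4) : Prop :=
  (f.2 = 0 ∧ 1 ≤ f.1.val → g.1.val < f.1.val) ∧
  (g.2 = 0 ∧ 1 ≤ g.1.val → f.1.val < g.1.val)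

instance : DecidableRel (Allowed n) := fun f g => by
  unfold Allowed; infer_instance

lemma Allowed.symm {n} {f g : Fin n × Fin 4} (h : Allowed n f g) : Allowed n g f :=
  ⟨h.2, h.1⟩

def rank (f : Fin n × Fin 4) : ℕ :=
  if f.2 = 0 ∧ 1 ≤ f.1.val then f.1.val - 1 else n + 4 * f.1.val + f.2.val

def g (m : ℕ) : ℕ := if m ≤ 2 * n + 2 then m - 1 else 4 * n + 4 - m

def Inv (s : Finset (Fin n × Fin 4)) : Prop :=
  ∃ t : ℕ, 1 ≤ t ∧ t ≤ n ∧
    (∀ u : Fin n, 1 ≤ u.val → (((u, 0) : Fin n × Fin 4) ∈ s ↔ t ≤ u.val)) ∧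
    (∀ u : Fin n, ∀ j : Fin 4, t ≤ u.val → (u, j) ∈ s) ∧
    (t ≤ n - 1 → s.card = 4 * n - 2 * (t - 1))

lemma card_upper (t : ℕ) (_htn : t ≤ n) :
    ((Finset.univ : Finset (Fin n × Fin 4)).filter (fun x => t ≤ x.1.val)).card
      = (n - t) * 4 := by
  rw [show (n - t) * 4 = ((Finset.Ico t n) ×ˢ (Finset.univ : Finset (Fin 4))).card by
    rw [Finset.card_product, Nat.card_Ico]; simp]
  apply Finset.card_nbij (fun x => (x.1.val, x.2))
  · intro a ha
    simp only [Finset.mem_coe, Finset.mem_filter, Finset.mem_univ, true_and] at ha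
    simp [Finset.mem_product, Finset.mem_Ico, ha, a.1.isLt]
  · intro a _ b _ hab
    simp only [Prod.mk.injEq] at hab
    exact Prod.ext (Fin.ext hab.1) hab.2
  · intro p hp
    simp only [Finset.coe_product, Set.mem_prod, Finset.coe_Ico, Set.mem_Ico] at hp
    exact ⟨(⟨p.1, hp.1.2⟩, p.2), by simp [Finset.mem_filter, hp.1.1], rfl⟩

lemma step (hn : 1 ≤ n) (s : Finset (Fin n × Fin 4)) (v : Fin n × Fin 4)
    (hI : Inv n s) (hv : v ∈ s) (hmin : ∀ w ∈ s, rank n v ≤ rank n w) :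
    g n s.card ≤ ((s.erase v).filter (Allowed n v)).card ∧
    ∀ x ∈ (s.erase v).filter (Allowed n v), Inv n ((s.erase v).erase x) := by
  obtain ⟨t, ht1, htn, hz, hh, hc⟩ := hI
  by_cases hph : t ≤ n - 1
  · -- phase 1
    have htlt : t < n := by omega
    set tF : Fin n := ⟨t, htlt⟩ with htF
    have htFs : ((tF, 0) : Fin n × Fin 4) ∈ s := (hz tF ht1).2 le_rfl
    have hrv : rank n v ≤ t - 1 := by
      have := hmin _ htFs
      have : rank n (tF, (0 : Fin 4)) = t - 1 := by simp [rank, htF, ht1]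
      omega
    have hveq : v = (tF, (0 : Fin 4)) := by
      by_cases hcase : v.2 = 0 ∧ 1 ≤ v.1.val
      · have hr : rank n v = v.1.val - 1 := by simp [rank, hcase]
        have hts : t ≤ v.1.val := by
          have := (hz v.1 hcase.2).1
          rw [← hcase.1] at this
          exact this hv
        have : v.1.val = t := by omega
        exact Prod.ext (Fin.ext this) hcase.1
      · have hr : rank n v = n + 4 * v.1.val + v.2.val := by simp [rank, hcase]
        omega
    subst hveq
    have havail : (s.erase (tF, (0:Fin 4))).filter (Allowed n (tF, 0))
        = s.filter (fun x => x.1.val < t) := by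
      ext x
      simp only [Finset.mem_filter, Finset.mem_erase]
      constructor
      · rintro ⟨⟨hne, hxs⟩, hA⟩
        exact ⟨hxs, hA.1 ⟨rfl, ht1⟩⟩
      · rintro ⟨hxs, hlt⟩
        refine ⟨⟨?_, hxs⟩, ⟨fun _ => hlt, fun hx0 => ?_⟩⟩
        · intro hxeq
          rw [hxeq] at hlt; simp [htF] at hlt
        · exfalso
          have hx : ((x.1, 0) : Fin n × Fin 4) ∈ s := by
            rw [← hx0.1, Prod.mk.eta]; exact hxs
          have := (hz x.1 hx0.2).1 hx
          omega
    have hcardhi : (s.filter (fun x => t ≤ x.1.val)).card = (n - t) * 4 := by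
      rw [show s.filter (fun x => t ≤ x.1.val)
            = (Finset.univ : Finset (Fin n × Fin 4)).filter (fun x => t ≤ x.1.val) by
        ext x
        simp only [Finset.mem_filter, Finset.mem_univ, true_and, and_iff_right_iff_imp]
        intro hx
        have := hh x.1 x.2 hx
        rwa [Prod.mk.eta] at this]
      exact card_upper n t htn
    have hsplit := Finset.card_filter_add_card_filter_not
      (s := s) (p := fun x : Fin n × Fin 4 => x.1.val < t)
    have hneg : (s.filter (fun x => ¬ x.1.val < t)) = s.filter (fun x => t ≤ x.1.val) := by
      ext x; simp [Finset.mem_filter, Nat.not_lt]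
    rw [hneg] at hsplit
    have hscard : s.card = 4 * n - 2 * (t - 1) := hc hph
    have hlocard : (s.filter (fun x => x.1.val < t)).card = 2 * t + 2 := by omega
    constructor
    · rw [havail, hlocard]
      have : ¬ (s.card ≤ 2 * n + 2) := by omega
      simp only [g, if_neg this]
      omega
    · intro x hx
      rw [havail, Finset.mem_filter] at hx
      obtain ⟨hxs, hxlt⟩ := hx
      have hxne : x ≠ (tF, (0:Fin 4)) := by
        intro h; rw [h] at hxlt; simp [htF] at hxlt
      have hx0 : ¬ (x.2 = 0 ∧ 1 ≤ x.1.val) := by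
        rintro ⟨h20, h1⟩
        have := (hz x.1 h1).1
        have hxmem : ((x.1, 0) : Fin n × Fin 4) ∈ s := by
          rwa [← h20, Prod.mk.eta]
        have := this hxmem
        omega
      refine ⟨t + 1, by omega, by omega, ?_, ?_, ?_⟩
      · intro u hu
        simp only [Finset.mem_erase]
        constructor
        · rintro ⟨hne1, hne2, hmem⟩
          have := (hz u hu).1 hmem
          have hut : u ≠ tF := fun h => hne2 (by rw [h])
          have : u.val ≠ t := fun h => hut (Fin.ext h)
          omega
        · intro hu1
          refine ⟨?_, ?_, (hz u hu).2 (by omega)⟩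
          · intro h
            rw [Prod.mk.injEq] at h
            have h1v : u.val = x.1.val := congrArg Fin.val h.1
            exact hx0 ⟨h.2.symm, by omega⟩
          · intro h
            rw [Prod.mk.injEq] at h
            have h1v : u.val = (tF : ℕ) := congrArg Fin.val h.1
            have htv : (tF : ℕ) = t := rfl
            omega
      · intro u j hu
        have h1 : (u, j) ∈ s := hh u j (by omega)
        refine Finset.mem_erase.2 ⟨?_, Finset.mem_erase.2 ⟨?_, h1⟩⟩
        · intro h
          rw [Prod.mk.injEq] at h
          have : u.val = x.1.val := congrArg Fin.val h.1
          omega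
        · intro h
          rw [Prod.mk.injEq] at h
          have h1v : u.val = (tF : ℕ) := congrArg Fin.val h.1
          have htv : (tF : ℕ) = t := rfl
          omega
      · intro _
        have hxe : x ∈ s.erase (tF, (0:Fin 4)) := Finset.mem_erase.2 ⟨hxne, hxs⟩
        rw [Finset.card_erase_of_mem hxe, Finset.card_erase_of_mem htFs]
        omega
  · -- phase 2 : t = n
    have hteq : t = n := by omega
    have hnozero : ∀ w : Fin n × Fin 4, w ∈ s → ¬ (w.2 = 0 ∧ 1 ≤ w.1.val) := by
      rintro w hw ⟨h0, h1⟩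
      have hwmem : ((w.1, 0) : Fin n × Fin 4) ∈ s := by
        rw [← h0, Prod.mk.eta]; exact hw
      have := (hz w.1 h1).1 hwmem
      have := w.1.isLt
      omega
    have havail : (s.erase v).filter (Allowed n v) = s.erase v := by
      apply Finset.filter_true_of_mem
      intro x hx
      have hxs := Finset.mem_of_mem_erase hx
      exact ⟨fun h => absurd h (hnozero v hv), fun h => absurd h (hnozero x hxs)⟩
    rw [havail]
    constructor
    · rw [Finset.card_erase_of_mem hv]
      simp only [g]
      split <;> omega
    · intro x hx
      refine ⟨n, hn, le_rfl, ?_, ?_, ?_⟩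
      · intro u hu
        have huval := u.isLt
        constructor
        · intro hmem
          have : ((u, 0) : Fin n × Fin 4) ∈ s :=
            Finset.mem_of_mem_erase (Finset.mem_of_mem_erase hmem)
          have := (hz u hu).1 this
          omega
        · intro h; exact absurd h (by omega)
      · intro u j hu
        have := u.isLt
        exact absurd hu (by omega)
      · intro h
        exact absurd h (by omega)


def b (k : ℕ) : ℕ := ∏ i ∈ Finset.range k, g n (2 * (i + 1))
def MM (s : Finset (Fin n × Fin 4)) : Type :=
  {σ : Equiv.Perm (Fin n × Fin 4) //
    (∀ v ∈ s, σ v ∈ s ∧ σ v ≠ v ∧ Allowed n v (σ v)) ∧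
    (∀ v ∉ s, σ v = v) ∧ (∀ v, σ (σ v) = v)}
instance (s : Finset (Fin n × Fin 4)) : Fintype (MM n s) := by unfold MM; infer_instance

lemma greedy (hn : 1 ≤ n) :
    ∀ k (s : Finset (Fin n × Fin 4)), Inv n s → s.card = 2 * k →
      b n k ≤ Fintype.card (MM n s) := by
  intro k
  induction k with
  | zero =>
    intro s _ hcard
    have hone : (1 : Equiv.Perm (Fin n × Fin 4)) ∈ (Set.univ : Set _) := trivial
    have hs : s = ∅ := Finset.card_eq_zero.1 (by omega)
    have : Nonempty (MM n s) := by
      refine ⟨⟨1, ?_, ?_, ?_⟩⟩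
      · intro v hv; rw [hs] at hv; exact absurd hv (Finset.notMem_empty v)
      · intro v _; rfl
      · intro v; rfl
    have := Fintype.card_pos_iff.2 this
    simp only [b, Finset.range_zero, Finset.prod_empty]; exact this
  | succ k ih =>
    intro s hI hcard
    have hne : s.Nonempty := Finset.card_pos.1 (by omega)
    obtain ⟨v, hv, hmin⟩ := Finset.exists_min_image s (rank n) hne
    obtain ⟨hg, hpres⟩ := step n hn s v hI hv hmin
    set av := (s.erase v).filter (Allowed n v) with hav
    -- facts about elements of av
    have hmemav : ∀ x ∈ av, x ∈ s ∧ x ≠ v ∧ Allowed n v x := by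
      intro x hx
      rw [hav, Finset.mem_filter, Finset.mem_erase] at hx
      exact ⟨hx.1.2, hx.1.1, hx.2⟩
    have hcard' : ∀ x ∈ av, ((s.erase v).erase x).card = 2 * k := by
      intro x hx
      obtain ⟨hxs, hxv, _⟩ := hmemav x hx
      rw [Finset.card_erase_of_mem (Finset.mem_erase.2 ⟨hxv, hxs⟩),
          Finset.card_erase_of_mem hv]
      omega
    -- the injection
    have key : ∀ x, x ∈ av → ∀ τ : MM n ((s.erase v).erase x),
        ∃ σ : MM n s, σ.1 = τ.1 * Equiv.swap v x ∧ σ.1 v = x := by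
      intro x hx τ
      obtain ⟨hxs, hxv, hAvx⟩ := hmemav x hx
      obtain ⟨hτ1, hτ2, hτ3⟩ := τ.2
      have hvs' : v ∉ (s.erase v).erase x := fun h =>
        (Finset.notMem_erase v s) (Finset.mem_of_mem_erase h)
      have hxs' : x ∉ (s.erase v).erase x := Finset.notMem_erase x _
      have hmem_s' : ∀ w, w ∈ s → w ≠ v → w ≠ x → w ∈ (s.erase v).erase x :=
        fun w hw h1 h2 => Finset.mem_erase.2 ⟨h2, Finset.mem_erase.2 ⟨h1, hw⟩⟩
      have hsub : ∀ w, w ∈ (s.erase v).erase x → w ∈ s := fun w hw =>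
        Finset.mem_of_mem_erase (Finset.mem_of_mem_erase hw)
      set σ := τ.1 * Equiv.swap v x with hσ
      have happ : ∀ w, σ w = τ.1 (Equiv.swap v x w) := fun w => rfl
      have hσv : σ v = x := by rw [happ, Equiv.swap_apply_left]; exact hτ2 x hxs'
      have hσx : σ x = v := by rw [happ, Equiv.swap_apply_right]; exact hτ2 v hvs'
      have hσo : ∀ w, w ≠ v → w ≠ x → σ w = τ.1 w := by
        intro w h1 h2; rw [happ, Equiv.swap_apply_of_ne_of_ne h1 h2]
      refine ⟨⟨σ, ?_, ?_, ?_⟩, rfl, hσv⟩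
      · intro w hw
        by_cases h1 : w = v
        · subst h1; rw [hσv]; exact ⟨hxs, hxv, hAvx⟩
        by_cases h2 : w = x
        · subst h2; rw [hσx]; exact ⟨hv, fun h => hxv h.symm, hAvx.symm⟩
        · rw [hσo w h1 h2]
          obtain ⟨ha, hb, hc⟩ := hτ1 w (hmem_s' w hw h1 h2)
          exact ⟨hsub _ ha, hb, hc⟩
      · intro w hw
        have h1 : w ≠ v := fun h => hw (h ▸ hv)
        have h2 : w ≠ x := fun h => hw (h ▸ hxs)
        rw [hσo w h1 h2]
        exact hτ2 w (fun h => hw (hsub w h))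
      · intro w
        by_cases h1 : w = v
        · subst h1; rw [hσv, hσx]
        by_cases h2 : w = x
        · subst h2; rw [hσx, hσv]
        · rw [hσo w h1 h2]
          by_cases h3 : w ∈ (s.erase v).erase x
          · have hτw := (hτ1 w h3).1
            rw [hσo _ (fun h => hvs' (by rwa [h] at hτw))
              (fun h => hxs' (by rwa [h] at hτw))]
            exact hτ3 w
          · rw [hτ2 w h3, hσo w h1 h2, hτ2 w h3]
    choose Φ hΦeq hΦv using key
    have hΦinj : Function.Injective
        (fun d : Σ x : {x // x ∈ av}, MM n ((s.erase v).erase x.1) =>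
          Φ d.1.1 d.1.2 d.2) := by
      rintro ⟨⟨x1, hx1⟩, τ1⟩ ⟨⟨x2, hx2⟩, τ2⟩ heq
      simp only at heq
      have hval : (Φ x1 hx1 τ1).1 = (Φ x2 hx2 τ2).1 := by rw [heq]
      have e1 := hΦv x1 hx1 τ1
      have e2 := hΦv x2 hx2 τ2
      rw [hval] at e1
      have hx12 : x1 = x2 := e1.symm.trans e2
      subst hx12
      have : τ1.1 * Equiv.swap v x1 = τ2.1 * Equiv.swap v x1 := by
        rw [← hΦeq x1 hx1 τ1, ← hΦeq x1 hx2 τ2]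
        exact hval
      have hττ : τ1 = τ2 := Subtype.ext (mul_right_cancel this)
      subst hττ
      rfl
    have hcard_le := Fintype.card_le_of_injective _ hΦinj
    rw [Fintype.card_sigma] at hcard_le
    have hsum : (Finset.univ : Finset {x // x ∈ av}).card • b n k
        ≤ ∑ x : {x // x ∈ av}, Fintype.card (MM n ((s.erase v).erase x.1)) := by
      apply Finset.card_nsmul_le_sum
      intro x _
      exact ih ((s.erase v).erase x.1) (hpres x.1 x.2) (hcard' x.1 x.2)
    rw [Finset.card_univ, Fintype.card_coe] at hsum
    have hbk : b n (k + 1) = b n k * g n (2 * (k + 1)) := Finset.prod_range_succ _ _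
    calc b n (k+1) = b n k * g n (2 * (k+1)) := hbk
      _ ≤ b n k * av.card := Nat.mul_le_mul_left _ (hcard ▸ hg)
      _ = av.card • b n k := by rw [smul_eq_mul, mul_comm]
      _ ≤ _ := hsum.trans hcard_le


lemma prod_odds : ∀ k, (∏ i ∈ Finset.range k, (2*i+1)) * (2^k * Nat.factorial k)
    = Nat.factorial (2*k) := by
  intro k
  induction k with
  | zero => simp
  | succ k ih =>
    rw [Finset.prod_range_succ]
    have h2 : 2*(k+1) = (2*k+1)+1 := by ring
    rw [h2, Nat.factorial_succ, ← Nat.succ_eq_add_one (2*k), Nat.factorial_succ]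
    rw [pow_succ, Nat.factorial_succ]
    rw [← ih]
    simp only [Nat.succ_eq_add_one]
    ring
lemma prod_evens : ∀ k, (∏ i ∈ Finset.range k, (2*i+4)) = 2^k * Nat.factorial (k+1) := by
  intro k
  induction k with
  | zero => simp
  | succ k ih =>
    rw [Finset.prod_range_succ, ih, pow_succ, Nat.factorial_succ (k+1)]
    ring
lemma two_mul_b (hn : 1 ≤ n) : 2 * b n (2*n) = Nat.factorial (2*n+1) := by
  have hsplit : b n (2*n)
      = (∏ i ∈ Finset.range (n+1), g n (2*(i+1)))
        * ∏ i ∈ Finset.range (n-1), g n (2*((n+1+i)+1)) := by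
    rw [b, show 2*n = (n+1) + (n-1) by omega, Finset.prod_range_add]
  have h1 : (∏ i ∈ Finset.range (n+1), g n (2*(i+1)))
      = ∏ i ∈ Finset.range (n+1), (2*i+1) := by
    apply Finset.prod_congr rfl
    intro i hi
    rw [Finset.mem_range] at hi
    rw [g, if_pos (by omega)]
    omega
  have h2 : (∏ i ∈ Finset.range (n-1), g n (2*((n+1+i)+1)))
      = ∏ i ∈ Finset.range (n-1), (2*n - 2*i) := by
    apply Finset.prod_congr rfl
    intro i hi
    rw [Finset.mem_range] at hi
    rw [g, if_neg (by omega)]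
    omega
  have h3 : (∏ i ∈ Finset.range (n-1), (2*n - 2*i))
      = ∏ i ∈ Finset.range (n-1), (2*i+4) := by
    rw [← Finset.prod_range_reflect (fun j => 2*n - 2*j) (n-1)]
    apply Finset.prod_congr rfl
    intro i hi
    rw [Finset.mem_range] at hi
    omega
  have h4 := prod_evens (n-1)
  have h5 : n - 1 + 1 = n := by omega
  rw [h5] at h4
  have h6 := prod_odds (n+1)
  -- 2 * b * (2n+2) = (2n+1)! * (2n+2)
  have key : (2 * b n (2*n)) * (2*n+2) = Nat.factorial (2*n+1) * (2*n+2) := by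
    rw [hsplit, h1, h2, h3, h4]
    have : (2 * ((∏ i ∈ Finset.range (n+1), (2*i+1)) * (2^(n-1) * Nat.factorial n))) * (2*n+2)
        = (∏ i ∈ Finset.range (n+1), (2*i+1)) * (2^(n+1) * Nat.factorial (n+1)) := by
      rw [Nat.factorial_succ]
      rw [show 2^(n+1) = 2 * 2 * 2^(n-1) by
        rw [show n + 1 = (n-1) + 2 by omega, pow_add]; ring]
      ring
    rw [this, h6]
    rw [show 2*(n+1) = (2*n+1)+1 by ring, Nat.factorial_succ]
    ring
  have hpos : 0 < 2*n+2 := by omega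
  exact Nat.eq_of_mul_eq_mul_right hpos key


def GoodT {n : ℕ} (T : CombinatorialTriangulation n) : Prop :=
  ∀ t : Fin n, 1 ≤ t.val → ((T.glue (t, 0)).1).val < t.val

lemma connected_of_good {n : ℕ} (hn : 1 ≤ n) (T : CombinatorialTriangulation n)
    (hT : GoodT T) : IsConnectedTriangulation T := by
  have hzero : ∀ m : ℕ, ∀ a : Fin n, a.val = m →
      (facePairingGraph T).Reachable a ⟨0, hn⟩ := by
    intro m
    induction m using Nat.strong_induction_on with
    | _ m ih =>
      intro a ha
      by_cases h0 : a.val = 0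
      · have : a = ⟨0, hn⟩ := Fin.ext h0
        rw [this]
      · have h1 : 1 ≤ a.val := by omega
        set s := (T.glue (a, 0)).1 with hs
        have hlt : s.val < a.val := hT a h1
        have hne : a ≠ s := fun h => by rw [← h] at hlt; omega
        have hadj : (facePairingGraph T).Adj a s := by
          rw [facePairingGraph, SimpleGraph.fromRel_adj]
          exact ⟨hne, Or.inl ⟨0, rfl⟩⟩
        exact hadj.reachable.trans (ih s.val (by omega) s rfl)
  rw [IsConnectedTriangulation, SimpleGraph.connected_iff]
  refine ⟨fun a b => (hzero a.val a rfl).trans (hzero b.val b rfl).symm, ⟨⟨0, hn⟩⟩⟩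

/-- order on faces -/
def eo : (Fin n × Fin 4) ≃ Fin (n * 4) := finProdFinEquiv

/-- representatives of glued pairs -/
abbrev Reps (σ : Equiv.Perm (Fin n × Fin 4)) : Type :=
  {f : Fin n × Fin 4 // eo n f < eo n (σ f)}

def mkRot (a b : Fin 4) (q : Equiv.Perm {x : Fin 4 // x ≠ a}) : Equiv.Perm (Fin 4) :=
  Equiv.swap a b * Equiv.Perm.ofSubtype q

lemma mkRot_apply (a b : Fin 4) (q : Equiv.Perm {x : Fin 4 // x ≠ a}) :
    mkRot a b q a = b := by
  have h1 : Equiv.Perm.ofSubtype q a = a :=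
    Equiv.Perm.ofSubtype_apply_of_not_mem q (by simp)
  simp [mkRot, h1]

lemma mkRot_inj (a b : Fin 4) (q q' : Equiv.Perm {x : Fin 4 // x ≠ a})
    (h : mkRot a b q = mkRot a b q') : q = q' := by
  have h2 : Equiv.Perm.ofSubtype q = Equiv.Perm.ofSubtype q' := by
    have := congrArg (fun p => (Equiv.swap a b)⁻¹ * p) h
    simpa [mkRot, ← mul_assoc] using this
  apply Equiv.ext
  intro x
  have hx := congrArg (fun p : Equiv.Perm (Fin 4) => p x.1) h2
  simp only [Equiv.Perm.ofSubtype_apply_of_mem q x.2,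
    Equiv.Perm.ofSubtype_apply_of_mem q' x.2] at hx
  exact Subtype.ext hx

variable {n}

/-- rotation data for a matching -/
abbrev RotData (σ : Equiv.Perm (Fin n × Fin 4)) : Type :=
  ∀ f : Reps n σ, Equiv.Perm {x : Fin 4 // x ≠ f.1.2}

section Build
variable (σ : Equiv.Perm (Fin n × Fin 4))

lemma hcorep (hfp : ∀ v, σ v ≠ v) (hinv : ∀ v, σ (σ v) = v)
    (f : Fin n × Fin 4) (h : ¬ eo n f < eo n (σ f)) :
    eo n (σ f) < eo n (σ (σ f)) := by
  rw [hinv f]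
  exact lt_of_le_of_ne (not_lt.1 h) (fun hh => hfp f ((eo n).injective hh))

def mk2 (r : RotData σ) (e : Reps n σ) (c : Fin 4) : Equiv.Perm (Fin 4) :=
  mkRot e.1.2 c (r e)

def buildRot (hfp : ∀ v, σ v ≠ v) (hinv : ∀ v, σ (σ v) = v) (r : RotData σ)
    (f : Fin n × Fin 4) : Equiv.Perm (Fin 4) :=
  if h : eo n f < eo n (σ f) then mk2 σ r ⟨f, h⟩ (σ f).2
  else (mk2 σ r ⟨σ f, hcorep σ hfp hinv f h⟩ f.2)⁻¹

def buildT (hfp : ∀ v, σ v ≠ v) (hinv : ∀ v, σ (σ v) = v) (r : RotData σ) :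
    CombinatorialTriangulation n where
  glue := σ
  glue_involutive := hinv
  glue_fixedPointFree := hfp
  rot := buildRot σ hfp hinv r
  rot_opp := by
    intro f
    simp only [buildRot]
    split
    · next h => exact mkRot_apply _ _ _
    · next h =>
      rw [Equiv.Perm.inv_eq_iff_eq]
      exact (mkRot_apply _ _ _).symm
  rot_inverse := by
    intro f
    simp only [buildRot]
    by_cases h : eo n f < eo n (σ f)
    · have hcond : ¬ eo n (σ f) < eo n (σ (σ f)) := by
        rw [hinv f]; exact asymm h
      rw [dif_neg hcond, dif_pos h]
      have heq : (⟨σ (σ f), hcorep σ hfp hinv (σ f) hcond⟩ : Reps n σ) = ⟨f, h⟩ :=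
        Subtype.ext (hinv f)
      rw [heq]
    · have hcond : eo n (σ f) < eo n (σ (σ f)) := hcorep σ hfp hinv f h
      rw [dif_pos hcond, dif_neg h, inv_inv]
      have h2 : (σ (σ f)).2 = f.2 := by rw [hinv f]
      rw [h2]

end Build
end CTAux

namespace CTAux
variable (n : ℕ)


lemma CT_ext {n : ℕ} {T T' : CombinatorialTriangulation n}
    (h1 : T.glue = T'.glue) (h2 : T.rot = T'.rot) : T = T' := by
  cases T; cases T'; simp_all

instance (n : ℕ) : Finite (CombinatorialTriangulation n) := by
  apply Finite.of_injective
    (fun T : CombinatorialTriangulation n => (T.glue, T.rot))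
  intro T T' h
  rw [Prod.mk.injEq] at h
  exact CT_ext h.1 h.2


lemma card_reps (σ : Equiv.Perm (Fin n × Fin 4))
    (hfp : ∀ v, σ v ≠ v) (hinv : ∀ v, σ (σ v) = v) :
    Fintype.card (Reps n σ) = 2 * n := by
  have hcr : Fintype.card (Reps n σ)
      = (Finset.univ.filter (fun f => eo n f < eo n (σ f))).card := by
    rw [Fintype.card_subtype]
  have h1 : Finset.univ.filter (fun f => ¬ eo n f < eo n (σ f))
      = Finset.univ.filter (fun f => eo n (σ f) < eo n f) := by
    ext f
    simp only [Finset.mem_filter, Finset.mem_univ, true_and, not_lt]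
    constructor
    · intro hle
      exact lt_of_le_of_ne hle (fun hh => hfp f ((eo n).injective hh))
    · exact le_of_lt
  have h2 : (Finset.univ.filter (fun f => eo n f < eo n (σ f))).card
      = (Finset.univ.filter (fun f => eo n (σ f) < eo n f)).card := by
    apply Finset.card_nbij σ
    · intro a ha
      simp only [Finset.mem_coe, Finset.mem_filter, Finset.mem_univ, true_and] at ha ⊢
      rw [hinv a]
      exact ha
    · exact fun a _ c _ hac => σ.injective hac
    · intro b hb
      simp only [Finset.coe_filter, Set.mem_setOf_eq, Finset.mem_univ, true_and] at hb
      refine ⟨σ b, ?_, hinv b⟩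
      simp only [Finset.coe_filter, Set.mem_setOf_eq, Finset.mem_univ, true_and]
      rw [hinv b]
      exact hb
  have h3 := Finset.card_filter_add_card_filter_not
    (s := (Finset.univ : Finset (Fin n × Fin 4)))
    (p := fun f => eo n f < eo n (σ f))
  rw [h1] at h3
  have h4 : (Finset.univ : Finset (Fin n × Fin 4)).card = n * 4 := by
    rw [Finset.card_univ, Fintype.card_prod, Fintype.card_fin, Fintype.card_fin]
  omega

lemma card_rotData (σ : Equiv.Perm (Fin n × Fin 4))
    (hfp : ∀ v, σ v ≠ v) (hinv : ∀ v, σ (σ v) = v) :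
    Fintype.card (RotData σ) = 6 ^ (2 * n) := by
  have hpi : Fintype.card (RotData σ)
      = ∏ f : Reps n σ, Fintype.card (Equiv.Perm {x : Fin 4 // x ≠ f.1.2}) := by
    rw [Fintype.card_pi]
  rw [hpi]
  have hconst : ∀ f : Reps n σ,
      Fintype.card (Equiv.Perm {x : Fin 4 // x ≠ f.1.2}) = 6 := by
    intro f
    rw [Fintype.card_perm]
    have h3 : Fintype.card {x : Fin 4 // x ≠ f.1.2} = 3 := by
      simp [Fintype.card_subtype_compl]
    rw [h3]
    rfl
  rw [Finset.prod_congr rfl (fun f _ => hconst f), Finset.prod_const,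
    Finset.card_univ, card_reps n σ hfp hinv]

lemma MM_fp (τ : MM n Finset.univ) : ∀ v, τ.1 v ≠ v :=
  fun v => (τ.2.1 v (Finset.mem_univ v)).2.1
lemma MM_inv (τ : MM n Finset.univ) : ∀ v, τ.1 (τ.1 v) = v := τ.2.2.2

abbrev Dom : Type := Σ τ : MM n Finset.univ, RotData τ.1

lemma card_dom : Fintype.card (Dom n)
    = Fintype.card (MM n Finset.univ) * 6 ^ (2 * n) := by
  rw [Fintype.card_sigma]
  rw [Finset.sum_congr rfl
    (fun τ _ => card_rotData n τ.1 (MM_fp n τ) (MM_inv n τ))]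
  rw [Finset.sum_const, Finset.card_univ, smul_eq_mul]

def Theta (d : Dom n) : {T : CombinatorialTriangulation n // GoodT T} :=
  ⟨buildT d.1.1 (MM_fp n d.1) (MM_inv n d.1) d.2, by
    intro t ht
    exact ((d.1.2.1 (t, 0) (Finset.mem_univ _)).2.2).1 ⟨rfl, ht⟩⟩

lemma Theta_inj : Function.Injective (Theta n) := by
  rintro ⟨⟨σ1, hp1⟩, r1⟩ ⟨⟨σ2, hp2⟩, r2⟩ h
  rw [Subtype.ext_iff] at h
  have hglue : σ1 = σ2 := congrArg CombinatorialTriangulation.glue h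
  subst hglue
  have hrot := congrArg CombinatorialTriangulation.rot h
  have hr : r1 = r2 := by
    funext e
    have he := congrFun hrot e.1
    simp only [Theta, buildT, buildRot, dif_pos e.2] at he
    have hq := mkRot_inj _ _ _ _ he
    exact hq
  subst hr
  rfl

lemma card_goodT :
    Fintype.card (MM n Finset.univ) * 6 ^ (2 * n)
      ≤ Nat.card {T : CombinatorialTriangulation n // GoodT T} := by
  rw [← card_dom, ← Nat.card_eq_fintype_card]
  exact Nat.card_le_card_of_injective (Theta n) (Theta_inj n)



end CTAux

namespace CTAux
variable {n : ℕ}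

lemma iso_refl (T : CombinatorialTriangulation n) : TriangulationIso T T := by
  refine ⟨1, fun _ => 1, ?_, ?_⟩ <;> intro f <;> simp

lemma perm_apply_inv_self {α : Type*} (σ : Equiv.Perm α) (x : α) : σ (σ⁻¹ x) = x := by
  simp only [Equiv.Perm.coe_inv, Equiv.apply_symm_apply]

lemma perm_inv_apply_self {α : Type*} (σ : Equiv.Perm α) (x : α) : σ⁻¹ (σ x) = x := by
  simp only [Equiv.Perm.coe_inv, Equiv.symm_apply_apply]

lemma iso_symm {T T' : CombinatorialTriangulation n}
    (h : TriangulationIso T T') : TriangulationIso T' T := by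
  obtain ⟨π, ρ, h1, h2⟩ := h
  refine ⟨π⁻¹, fun t => (ρ (π⁻¹ t))⁻¹, ?_, ?_⟩
  · intro f
    have hg := h1 (π⁻¹ f.1, (ρ (π⁻¹ f.1))⁻¹ f.2)
    simp only [perm_apply_inv_self, Prod.mk.eta] at hg
    rw [hg]
    simp [perm_inv_apply_self]
  · intro f
    have hg := h1 (π⁻¹ f.1, (ρ (π⁻¹ f.1))⁻¹ f.2)
    simp only [perm_apply_inv_self, Prod.mk.eta] at hg
    have hfst : π⁻¹ (T'.glue f).1
        = (T.glue (π⁻¹ f.1, (ρ (π⁻¹ f.1))⁻¹ f.2)).1 := by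
      rw [hg]; simp [perm_inv_apply_self]
    have hg2 := h2 (π⁻¹ f.1, (ρ (π⁻¹ f.1))⁻¹ f.2)
    simp only [perm_apply_inv_self, Prod.mk.eta] at hg2
    beta_reduce
    rw [hfst, hg2]
    group


lemma iso_trans {T T' T'' : CombinatorialTriangulation n}
    (h : TriangulationIso T T') (h' : TriangulationIso T' T'') :
    TriangulationIso T T'' := by
  obtain ⟨π1, ρ1, ha1, ha2⟩ := h
  obtain ⟨π2, ρ2, hb1, hb2⟩ := h'
  refine ⟨π2 * π1, fun t => ρ2 (π1 t) * ρ1 t, ?_, ?_⟩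
  · intro f
    have hb := hb1 (π1 f.1, ρ1 f.1 f.2)
    rw [ha1 f] at hb
    simpa [Equiv.Perm.mul_apply] using hb
  · intro f
    have hb := hb2 (π1 f.1, ρ1 f.1 f.2)
    have hfst : (T'.glue (π1 f.1, ρ1 f.1 f.2)).1 = π1 (T.glue f).1 := by
      rw [ha1 f]
    have hsnd := ha2 f
    rw [ha1 f] at hb
    beta_reduce
    simp only [Equiv.Perm.mul_apply]
    rw [hb, hsnd]
    group

lemma pair_inj (π : Equiv.Perm (Fin n)) (ρ : Fin n → Equiv.Perm (Fin 4))
    {a c : Fin n × Fin 4}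
    (h : ((π a.1, ρ a.1 a.2) : Fin n × Fin 4) = (π c.1, ρ c.1 c.2)) : a = c := by
  rw [Prod.mk.injEq] at h
  have h1 : a.1 = c.1 := π.injective h.1
  have h2 : a.2 = c.2 := by
    have := h.2
    rw [h1] at this
    exact (ρ c.1).injective this
  exact Prod.ext h1 h2

lemma card_orbit_bound (n : ℕ) :
    Nat.card {T : CombinatorialTriangulation n // IsConnectedTriangulation T}
      ≤ Nat.card (Quot (fun T T' : {T : CombinatorialTriangulation n //
          IsConnectedTriangulation T} => TriangulationIso T.1 T'.1))
        * (Nat.factorial n * 24 ^ n) := by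
  set R := fun T T' : {T : CombinatorialTriangulation n //
      IsConnectedTriangulation T} => TriangulationIso T.1 T'.1 with hR
  have hequiv : Equivalence R :=
    ⟨fun T => iso_refl T.1, fun h => iso_symm h, fun h h' => iso_trans h h'⟩
  have hrel : ∀ x : {T : CombinatorialTriangulation n // IsConnectedTriangulation T},
      R x (Quot.mk R x).out := by
    intro x
    have h0 : Quot.mk R x = Quot.mk R ((Quot.mk R x).out) := (Quot.out_eq _).symm
    exact (hequiv.eqvGen_iff).1 (Quot.eq.1 h0)
  have hinj : Function.Injective (fun x : {T : CombinatorialTriangulation n //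
      IsConnectedTriangulation T} =>
      (Quot.mk R x, (hrel x).choose, (hrel x).choose_spec.choose)) := by
    intro x y h
    simp only [Prod.mk.injEq] at h
    obtain ⟨hq, hπ, hρ⟩ := h
    set π := (hrel x).choose with hπx
    set ρ := (hrel x).choose_spec.choose with hρx
    have specx := (hrel x).choose_spec.choose_spec
    have specy := (hrel y).choose_spec.choose_spec
    have houts : (Quot.mk R y).out = (Quot.mk R x).out := by rw [hq]
    obtain ⟨hx1g, hx2g⟩ := specx
    obtain ⟨hy1g, hy2g⟩ := specy
    have hx1 : ∀ f : Fin n × Fin 4,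
        ((Quot.mk R x).out).1.glue (π f.1, ρ f.1 f.2)
          = (π (x.1.glue f).1, ρ (x.1.glue f).1 (x.1.glue f).2) := by
      intro f
      rw [hπx, hρx]
      exact hx1g f
    have hx2 : ∀ f : Fin n × Fin 4,
        ((Quot.mk R x).out).1.rot (π f.1, ρ f.1 f.2)
          = ρ (x.1.glue f).1 * x.1.rot f * (ρ f.1)⁻¹ := by
      intro f
      rw [hπx, hρx]
      exact hx2g f
    have hy1 : ∀ f : Fin n × Fin 4,
        ((Quot.mk R x).out).1.glue (π f.1, ρ f.1 f.2)
          = (π (y.1.glue f).1, ρ (y.1.glue f).1 (y.1.glue f).2) := by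
      intro f
      rw [hπ, hρ, ← houts]
      exact hy1g f
    have hy2 : ∀ f : Fin n × Fin 4,
        ((Quot.mk R x).out).1.rot (π f.1, ρ f.1 f.2)
          = ρ (y.1.glue f).1 * y.1.rot f * (ρ f.1)⁻¹ := by
      intro f
      rw [hπ, hρ, ← houts]
      exact hy2g f
    have hglue : x.1.glue = y.1.glue := by
      apply Equiv.ext
      intro f
      exact pair_inj π ρ ((hx1 f).symm.trans (hy1 f))
    have hrot : x.1.rot = y.1.rot := by
      funext f
      have h2 := (hx2 f).symm.trans (hy2 f)
      rw [← hglue] at h2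
      have h3 := mul_right_cancel h2
      exact mul_left_cancel h3
    exact Subtype.ext (CT_ext hglue hrot)
  have hcard := Nat.card_le_card_of_injective _ hinj
  calc Nat.card {T : CombinatorialTriangulation n // IsConnectedTriangulation T}
      ≤ _ := hcard
    _ = Nat.card (Quot R) * (Nat.factorial n * 24 ^ n) := by
        rw [Nat.card_prod, Nat.card_prod]
        congr 1
        rw [Nat.card_eq_fintype_card, Fintype.card_perm, Fintype.card_fin,
          Nat.card_eq_fintype_card, Fintype.card_fun, Fintype.card_perm,
          Fintype.card_fin, Fintype.card_fin]
        rfl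


end CTAux

/-- For every `n ≥ 1`, the number of isomorphism classes of connected combinatorial
triangulations of size `n` is at least `(2n+1)! · 6^(2n) / (2 · n! · 24^n)`. -/
theorem count_iso_classes_connected_triangulations_lower_bound (n : ℕ) (hn : 1 ≤ n) :
    ((Nat.factorial (2 * n + 1) : ℚ) * 6 ^ (2 * n)) /
        (2 * Nat.factorial n * 24 ^ n) ≤
      (Nat.card (Quot (fun T T' : {T : CombinatorialTriangulation n //
          IsConnectedTriangulation T} => TriangulationIso T.1 T'.1)) : ℚ) := by
  classical
  have hcardu : (Finset.univ : Finset (Fin n × Fin 4)).card = 2 * (2 * n) := by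
    rw [Finset.card_univ, Fintype.card_prod, Fintype.card_fin, Fintype.card_fin]
    omega
  have hInv : CTAux.Inv n Finset.univ := by
    refine ⟨1, le_rfl, hn, ?_, ?_, ?_⟩
    · intro u hu
      simp [hu]
    · intro u j _
      exact Finset.mem_univ _
    · intro _
      omega
  have hMM := CTAux.greedy n hn (2 * n) Finset.univ hInv hcardu
  have hGT := CTAux.card_goodT n
  have hconnmono : Nat.card {T : CombinatorialTriangulation n // CTAux.GoodT T}
      ≤ Nat.card {T : CombinatorialTriangulation n // IsConnectedTriangulation T} := by
    apply Nat.card_le_card_of_injective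
      (fun T : {T : CombinatorialTriangulation n // CTAux.GoodT T} =>
        (⟨T.1, CTAux.connected_of_good hn T.1 T.2⟩ :
          {T : CombinatorialTriangulation n // IsConnectedTriangulation T}))
    intro a c h
    have hval := congrArg Subtype.val h
    exact Subtype.ext hval
  have horb := CTAux.card_orbit_bound n
  have h2b := CTAux.two_mul_b n hn
  set Qc := Nat.card (Quot (fun T T' : {T : CombinatorialTriangulation n //
      IsConnectedTriangulation T} => TriangulationIso T.1 T'.1)) with hQc
  have hnat : Nat.factorial (2 * n + 1) * 6 ^ (2 * n)
      ≤ Qc * (2 * Nat.factorial n * 24 ^ n) := by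
    calc Nat.factorial (2 * n + 1) * 6 ^ (2 * n)
        = 2 * CTAux.b n (2 * n) * 6 ^ (2 * n) := by rw [h2b]
      _ ≤ 2 * Fintype.card (CTAux.MM n Finset.univ) * 6 ^ (2 * n) :=
          Nat.mul_le_mul_right _ (Nat.mul_le_mul_left 2 hMM)
      _ = 2 * (Fintype.card (CTAux.MM n Finset.univ) * 6 ^ (2 * n)) := by ring
      _ ≤ 2 * Nat.card {T : CombinatorialTriangulation n // CTAux.GoodT T} :=
          Nat.mul_le_mul_left 2 hGT
      _ ≤ 2 * Nat.card {T : CombinatorialTriangulation n //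
            IsConnectedTriangulation T} := Nat.mul_le_mul_left 2 hconnmono
      _ ≤ 2 * (Qc * (Nat.factorial n * 24 ^ n)) := Nat.mul_le_mul_left 2 horb
      _ = Qc * (2 * Nat.factorial n * 24 ^ n) := by ring
  have hpos : (0 : ℚ) < 2 * Nat.factorial n * 24 ^ n := by
    have := n.factorial_pos
    positivity
  rw [div_le_iff₀ hpos]
  calc ((Nat.factorial (2 * n + 1) : ℚ) * 6 ^ (2 * n))
      = ((Nat.factorial (2 * n + 1) * 6 ^ (2 * n) : ℕ) : ℚ) := by push_cast; ring
    _ ≤ ((Qc * (2 * Nat.factorial n * 24 ^ n) : ℕ) : ℚ) := by exact_mod_cast hnat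
    _ = (Qc : ℚ) * (2 * Nat.factorial n * 24 ^ n) := by push_cast; ring
end
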